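/- arXiv:2603.28806 — 5 statements merged into one kernel-verified Lean document; each statement's English description precedes it below -/
import Mathlib

section
/- Let M > 0 and α ≥ 0. Let f = h + conj(g) where h and g are analytic on the unit disc D with expansions h(z) = z + ∑_{n=2}^∞ aₙzⁿ and g(z) = ∑_{n=2}^∞ bₙzⁿ, suppose |f(z)| < M for all z ∈ D, and suppose |aₙ| + |bₙ| ≤ 2/(1 + (n − 1)α) for all n ≥ 2. Let ρ₃ ∈ (0, 1) be a root of π/(4M) − ∑_{n=2}^∞ 2n·r^{n−1}/(1 + (n − 1)α) = 0 and set R₃ = (π/(4M))·ρ₃ − ∑_{n=2}^∞ 2·ρ₃ⁿ/(1 + (n − 1)α). Then the image f(D_{ρ₃}) contains the disc {w ∈ ℂ : |w| < R₃}. -/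
open Complex MeasureTheory intervalIntegral

lemma aux_exp_int (k : ℤ) (hk : k ≠ 0) :
    ∫ θ in (0:ℝ)..(2*Real.pi), Complex.exp ((k:ℂ) * Complex.I * θ) = 0 := by
  have hc : ((k:ℂ) * Complex.I) ≠ 0 :=
    mul_ne_zero (Int.cast_ne_zero.mpr hk) Complex.I_ne_zero
  rw [integral_exp_mul_complex hc]
  have h1 : (k:ℂ) * Complex.I * (2*Real.pi:ℝ) = (k:ℤ) * (2 * (Real.pi:ℂ) * Complex.I) := by
    push_cast; ring
  rw [h1, Complex.exp_int_mul_two_pi_mul_I]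
  simp

lemma aux_M_ge (M : ℝ) (h g : ℂ → ℂ) (a b : ℕ → ℂ)
    (hhsum : ∀ z ∈ Metric.ball (0:ℂ) 1, HasSum (fun n : ℕ => a n * z ^ n) (h z))
    (hgsum : ∀ z ∈ Metric.ball (0:ℂ) 1, HasSum (fun n : ℕ => b n * z ^ n) (g z))
    (ha0 : a 0 = 0) (ha1 : a 1 = 1) (hb0 : b 0 = 0) (hb1 : b 1 = 0)
    (hcoef2 : ∀ n : ℕ, 2 ≤ n → ‖a n‖ + ‖b n‖ ≤ 2)
    (hbound : ∀ z ∈ Metric.ball (0:ℂ) 1,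
      ‖h z + starRingEnd ℂ (g z)‖ < M) :
    (4/5 : ℝ) ≤ M := by
  have hπ : (0:ℝ) < Real.pi := Real.pi_pos
  set r : ℝ := 4/5 with hr
  have hr0 : (0:ℝ) < r := by norm_num [hr]
  have hr1 : r < 1 := by norm_num [hr]
  set z : ℝ → ℂ := fun θ => (r:ℂ) * Complex.exp (θ * Complex.I) with hzdef
  have hexpnorm : ∀ θ : ℝ, ‖Complex.exp (θ * Complex.I)‖ = 1 :=
    fun θ => Complex.norm_exp_ofReal_mul_I θ
  have hznorm : ∀ θ : ℝ, ‖z θ‖ = r := by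
    intro θ
    rw [hzdef]
    rw [norm_mul, hexpnorm, Complex.norm_real, Real.norm_eq_abs, mul_one,
      _root_.abs_of_nonneg hr0.le]
  have hzball : ∀ θ : ℝ, z θ ∈ Metric.ball (0:ℂ) 1 := by
    intro θ
    rw [Metric.mem_ball, dist_zero_right, hznorm θ]
    exact hr1
  set F : ℕ → ℝ → ℂ := fun n θ =>
    (a n * (z θ)^n + (starRingEnd ℂ) (b n * (z θ)^n)) * Complex.exp (-(θ * Complex.I))
    with hFdef
  have hexpnorm' : ∀ θ : ℝ, ‖Complex.exp (-((θ:ℂ) * Complex.I))‖ = 1 := by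
    intro θ
    rw [show -((θ:ℂ) * Complex.I) = ((-θ : ℝ):ℂ) * Complex.I by push_cast; ring]
    exact Complex.norm_exp_ofReal_mul_I _
  have hFsum : ∀ θ : ℝ, HasSum (fun n => F n θ)
      ((h (z θ) + (starRingEnd ℂ) (g (z θ))) * Complex.exp (-(θ * Complex.I))) := by
    intro θ
    have h1 := hhsum (z θ) (hzball θ)
    have h2 : HasSum (fun n => (starRingEnd ℂ) (b n * (z θ)^n))
        ((starRingEnd ℂ) (g (z θ))) := by
      simp only [starRingEnd_apply]
      exact (hgsum (z θ) (hzball θ)).star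
    exact (h1.add h2).mul_right _
  have hFnorm : ∀ n θ, ‖F n θ‖ ≤ 2 * r ^ n := by
    intro n θ
    have h1 : ‖F n θ‖ = ‖a n * (z θ)^n + (starRingEnd ℂ) (b n * (z θ)^n)‖ := by
      rw [hFdef]
      simp only [norm_mul, hexpnorm' θ, mul_one]
    rw [h1]
    have h2 : ‖a n * (z θ)^n + (starRingEnd ℂ) (b n * (z θ)^n)‖
        ≤ (‖a n‖ + ‖b n‖) * r ^ n := by
      refine le_trans (norm_add_le _ _) ?_
      have e1 : ‖(starRingEnd ℂ) (b n * (z θ)^n)‖ = ‖b n * (z θ)^n‖ := by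
        rw [Complex.norm_conj]
      rw [e1, norm_mul, norm_mul, norm_pow, hznorm]
      exact le_of_eq (by ring)
    refine h2.trans ?_
    have hab : ‖a n‖ + ‖b n‖ ≤ 2 := by
      match n, ha0, ha1, hb0, hb1 with
      | 0, ha0, _, hb0, _ => simp [ha0, hb0]
      | 1, _, ha1, _, hb1 => norm_num [ha1, hb1]
      | (n+2), _, _, _, _ => exact hcoef2 (n+2) (by omega)
    have : (0:ℝ) ≤ r ^ n := pow_nonneg hr0.le n
    nlinarith [pow_nonneg hr0.le n]
  
  -- continuity of each F n
  have hFcont : ∀ n, Continuous (F n) := by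
    intro n
    rw [hFdef, hzdef]
    simp only [starRingEnd_apply]
    fun_prop
  have hIoc : volume (Set.Ioc (0:ℝ) (2*Real.pi)) = ENNReal.ofReal (2*Real.pi) := by
    rw [Real.volume_Ioc, sub_zero]
  have hIocR : volume.real (Set.Ioc (0:ℝ) (2*Real.pi)) = 2*Real.pi := by
    rw [measureReal_def, hIoc, ENNReal.toReal_ofReal (by positivity)]
  have hIoclt : volume (Set.Ioc (0:ℝ) (2*Real.pi)) < ⊤ := by
    rw [hIoc]; exact ENNReal.ofReal_lt_top
  have hFint : ∀ n, IntegrableOn (F n) (Set.Ioc 0 (2*Real.pi)) volume :=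
    fun n => (hFcont n).integrableOn_Ioc
  have hFnormint : Summable (fun n => ∫ θ in Set.Ioc (0:ℝ) (2*Real.pi), ‖F n θ‖) := by
    refine Summable.of_nonneg_of_le
      (fun n => integral_nonneg (fun θ => norm_nonneg _))
      (fun n => ?_) ((summable_geometric_of_lt_one hr0.le hr1).mul_left
        (2 * (2*Real.pi)))
    calc (∫ θ in Set.Ioc (0:ℝ) (2*Real.pi), ‖F n θ‖)
        ≤ ∫ _θ in Set.Ioc (0:ℝ) (2*Real.pi), 2 * r ^ n := by
          refine setIntegral_mono_on (hFint n).norm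
            (integrableOn_const hIoclt.ne) measurableSet_Ioc
            (fun θ _ => hFnorm n θ)
      _ = 2 * (2*Real.pi) * r ^ n := by
          rw [setIntegral_const, hIocR, smul_eq_mul]; ring
  have hinterchange : ∑' n, (∫ θ in Set.Ioc (0:ℝ) (2*Real.pi), F n θ)
      = ∫ θ in Set.Ioc (0:ℝ) (2*Real.pi), ∑' n, F n θ :=
    integral_tsum_of_summable_integral_norm (fun n => hFint n) hFnormint
  
  have h2π : (0:ℝ) ≤ 2*Real.pi := by positivity
  have hio : ∀ (f : ℝ → ℂ), (∫ θ in Set.Ioc (0:ℝ) (2*Real.pi), f θ)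
      = ∫ θ in (0:ℝ)..(2*Real.pi), f θ :=
    fun f => (intervalIntegral.integral_of_le h2π).symm
  -- rewrite F (n+2)
  have hFeq : ∀ (n : ℕ) (θ : ℝ), F (n+2) θ =
      (a (n+2) * (r:ℂ)^(n+2)) * Complex.exp ((((n:ℤ)+1:ℤ):ℂ) * Complex.I * θ)
      + ((starRingEnd ℂ) (b (n+2)) * (r:ℂ)^(n+2))
          * Complex.exp (((-((n:ℤ)+3):ℤ):ℂ) * Complex.I * θ) := by
    intro n θ
    have e1 : ((((n:ℤ)+1:ℤ)):ℂ) * Complex.I * θ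
        = ((n+2:ℕ):ℂ) * ((θ:ℂ) * Complex.I) + (-((θ:ℂ) * Complex.I)) := by
      push_cast; ring
    have e2 : (((-((n:ℤ)+3)):ℤ):ℂ) * Complex.I * θ
        = ((n+2:ℕ):ℂ) * ((θ:ℂ) * -Complex.I) + (-((θ:ℂ) * Complex.I)) := by
      push_cast; ring
    rw [hFdef, hzdef]
    simp only
    rw [e1, e2, Complex.exp_add, Complex.exp_add, Complex.exp_nat_mul, Complex.exp_nat_mul]
    simp only [map_mul, map_pow, Complex.conj_ofReal, ← Complex.exp_conj, Complex.conj_I,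
      mul_pow]
    ring
  have hint2 : ∀ n : ℕ, (∫ θ in Set.Ioc (0:ℝ) (2*Real.pi), F (n+2) θ) = 0 := by
    intro n
    rw [hio]
    have hc1 : Continuous fun θ : ℝ =>
        (a (n+2) * (r:ℂ)^(n+2)) * Complex.exp ((((n:ℤ)+1:ℤ):ℂ) * Complex.I * θ) := by
      fun_prop
    have hc2 : Continuous fun θ : ℝ =>
        ((starRingEnd ℂ) (b (n+2)) * (r:ℂ)^(n+2))
          * Complex.exp (((-((n:ℤ)+3):ℤ):ℂ) * Complex.I * θ) := by
      fun_prop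
    calc (∫ θ in (0:ℝ)..(2*Real.pi), F (n+2) θ)
        = ∫ θ in (0:ℝ)..(2*Real.pi),
            ((a (n+2) * (r:ℂ)^(n+2)) * Complex.exp ((((n:ℤ)+1:ℤ):ℂ) * Complex.I * θ)
            + ((starRingEnd ℂ) (b (n+2)) * (r:ℂ)^(n+2))
              * Complex.exp (((-((n:ℤ)+3):ℤ):ℂ) * Complex.I * θ)) := by
          apply intervalIntegral.integral_congr
          intro θ _
          exact hFeq n θ
      _ = 0 := by
          rw [intervalIntegral.integral_add (hc1.intervalIntegrable _ _)
            (hc2.intervalIntegrable _ _), intervalIntegral.integral_const_mul,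
            intervalIntegral.integral_const_mul,
            aux_exp_int ((n:ℤ)+1) (by omega), aux_exp_int (-((n:ℤ)+3)) (by omega)]
          simp
  have hF1 : ∀ θ : ℝ, F 1 θ = (r:ℂ) := by
    intro θ
    rw [hFdef, hzdef]
    simp only [ha1, hb1, one_mul, zero_mul, map_zero, add_zero, pow_one]
    rw [mul_assoc, ← Complex.exp_add]
    simp
  have hint1 : (∫ θ in Set.Ioc (0:ℝ) (2*Real.pi), F 1 θ) = ((2*Real.pi:ℝ):ℂ) * (r:ℂ) := by
    simp_rw [hF1]
    rw [setIntegral_const, hIocR, Complex.real_smul]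
  have hint0 : (∫ θ in Set.Ioc (0:ℝ) (2*Real.pi), F 0 θ) = 0 := by
    have : ∀ θ : ℝ, F 0 θ = 0 := by
      intro θ
      rw [hFdef]
      simp [ha0, hb0]
    simp_rw [this]
    simp
  have htsum_val : ∑' n, (∫ θ in Set.Ioc (0:ℝ) (2*Real.pi), F n θ)
      = ((2*Real.pi:ℝ):ℂ) * (r:ℂ) := by
    rw [tsum_eq_single 1 ?_]
    · exact hint1
    · intro n hn
      match n, hn with
      | 0, _ => exact hint0
      | (n+2), _ => exact hint2 n
  -- measurability of the sum
  have haesm : AEStronglyMeasurable (fun θ => ∑' n, F n θ)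
      (volume.restrict (Set.Ioc (0:ℝ) (2*Real.pi))) := by
    refine aestronglyMeasurable_of_tendsto_ae (u := Filter.atTop)
      (f := fun N θ => ∑ n ∈ Finset.range N, F n θ) ?_ ?_
    · intro N
      exact (continuous_finset_sum _ (fun i _ => hFcont i)).aestronglyMeasurable
    · refine Filter.Eventually.of_forall (fun θ => ?_)
      have := (hFsum θ).tendsto_sum_nat
      rwa [← (hFsum θ).tsum_eq] at this
  have hptbound : ∀ θ ∈ Set.Ioc (0:ℝ) (2*Real.pi), ‖∑' n, F n θ‖ ≤ M := by
    intro θ _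
    rw [(hFsum θ).tsum_eq, norm_mul, hexpnorm' θ,
      mul_one]
    exact (hbound (z θ) (hzball θ)).le
  have hfinal : ‖∫ θ in Set.Ioc (0:ℝ) (2*Real.pi), ∑' n, F n θ‖ ≤ M * (2*Real.pi) := by
    have := norm_setIntegral_le_of_norm_le_const (C := M) hIoclt hptbound
    rwa [hIocR] at this
  rw [← hinterchange, htsum_val] at hfinal
  rw [norm_mul, Complex.norm_real, Complex.norm_real, Real.norm_eq_abs,
    Real.norm_eq_abs, _root_.abs_of_nonneg h2π, _root_.abs_of_nonneg hr0.le] at hfinal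
  nlinarith [hπ]

lemma aux_pow_sub_pow (z₁ z₂ : ℂ) {ρ : ℝ} (h1 : ‖z₁‖ ≤ ρ) (h2 : ‖z₂‖ ≤ ρ) (n : ℕ) :
    ‖z₁^(n+2) - z₂^(n+2)‖ ≤ ((n:ℝ)+2) * ρ^(n+1) * ‖z₁ - z₂‖ := by
  have hρ : 0 ≤ ρ := le_trans (norm_nonneg _) h1
  rw [← geom_sum₂_mul, norm_mul]
  have hgs : ‖∑ i ∈ Finset.range (n+2), z₁ ^ i * z₂ ^ (n + 2 - 1 - i)‖
      ≤ ((n:ℝ)+2) * ρ^(n+1) := by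
    refine le_trans (norm_sum_le _ _) ?_
    have hterm : ∀ i ∈ Finset.range (n+2), ‖z₁ ^ i * z₂ ^ (n + 2 - 1 - i)‖ ≤ ρ^(n+1) := by
      intro i hi
      rw [Finset.mem_range] at hi
      rw [norm_mul, norm_pow, norm_pow]
      calc ‖z₁‖ ^ i * ‖z₂‖ ^ (n + 2 - 1 - i) ≤ ρ ^ i * ρ ^ (n + 2 - 1 - i) := by
            gcongr
        _ = ρ ^ (n+1) := by rw [← pow_add]; congr 1; omega
    refine le_trans (Finset.sum_le_sum hterm) ?_
    rw [Finset.sum_const, Finset.card_range, nsmul_eq_mul]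
    push_cast
    exact le_of_eq (by ring)
  calc ‖∑ i ∈ Finset.range (n+2), z₁ ^ i * z₂ ^ (n + 2 - 1 - i)‖ * ‖z₁ - z₂‖
      ≤ (((n:ℝ)+2) * ρ^(n+1)) * ‖z₁ - z₂‖ :=
        mul_le_mul_of_nonneg_right hgs (norm_nonneg _)
    _ = _ := by ring

/-- Landau-type theorem (covering) under the sharp coefficient bounds of the
class `G_{k,H}(α,1)`: with `ρ₃` a root of
`π/(4M) - ∑_{n≥2} 2n r^{n-1}/(1 + (n-1)α) = 0`, the image `f(D_{ρ₃})`
contains the disc of radius `R₃ = (π/(4M)) ρ₃ - ∑_{n≥2} 2 ρ₃ⁿ/(1 + (n-1)α)`. -/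
theorem landau_GkHa_covering (M α : ℝ) (hM : 0 < M) (hα : 0 ≤ α)
    (h g : ℂ → ℂ) (a b : ℕ → ℂ)
    (hhsum : ∀ z ∈ Metric.ball (0:ℂ) 1, HasSum (fun n : ℕ => a n * z ^ n) (h z))
    (hgsum : ∀ z ∈ Metric.ball (0:ℂ) 1, HasSum (fun n : ℕ => b n * z ^ n) (g z))
    (ha0 : a 0 = 0) (ha1 : a 1 = 1) (hb0 : b 0 = 0) (hb1 : b 1 = 0)
    (hcoef : ∀ n : ℕ, 2 ≤ n →
      ‖a n‖ + ‖b n‖ ≤ 2 / (1 + ((n : ℝ) - 1) * α))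
    (hbound : ∀ z ∈ Metric.ball (0:ℂ) 1,
      ‖h z + starRingEnd ℂ (g z)‖ < M)
    (ρ₃ : ℝ) (hρ₃ : ρ₃ ∈ Set.Ioo (0:ℝ) 1)
    (hroot : Real.pi / (4 * M)
        - ∑' n : ℕ, 2 * ((n : ℝ) + 2) * ρ₃ ^ (n + 1) / (1 + ((n : ℝ) + 1) * α) = 0) :
    Metric.ball (0:ℂ)
        (Real.pi / (4 * M) * ρ₃
          - ∑' n : ℕ, 2 * ρ₃ ^ (n + 2) / (1 + ((n : ℝ) + 1) * α)) ⊆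
      (fun z => h z + starRingEnd ℂ (g z)) '' (Metric.ball 0 ρ₃) := by
  obtain ⟨hρ0, hρ1⟩ := hρ₃
  set S : ℝ := ∑' n : ℕ, 2 * ρ₃ ^ (n + 2) / (1 + ((n : ℝ) + 1) * α) with hSdef
  set c : ℝ := Real.pi / (4 * M) with hcdef
  have hdenom : ∀ n : ℕ, (1:ℝ) ≤ 1 + ((n:ℝ)+1)*α := by
    intro n
    have : (0:ℝ) ≤ ((n:ℝ)+1)*α := by positivity
    linarith
  have hco : ∀ n : ℕ, ‖a (n+2)‖ + ‖b (n+2)‖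
      ≤ 2 / (1 + ((n:ℝ)+1)*α) := by
    intro n
    have h2 := hcoef (n+2) (by omega)
    rw [show (((n+2:ℕ)):ℝ) - 1 = (n:ℝ)+1 by push_cast; ring] at h2
    exact h2
  have hM45 : (4/5:ℝ) ≤ M := by
    refine aux_M_ge M h g a b hhsum hgsum ha0 ha1 hb0 hb1 (fun n hn => ?_) hbound
    refine (hcoef n hn).trans ?_
    have hd : (1:ℝ) ≤ 1 + ((n:ℝ)-1)*α := by
      have h1 : (1:ℝ) ≤ (n:ℝ) := by exact_mod_cast Nat.one_le_of_lt hn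
      nlinarith
    exact div_le_self (by norm_num) hd
  have hc0 : 0 < c := by
    rw [hcdef]
    positivity
  have hc1 : c < 1 := by
    rw [hcdef, div_lt_one (by positivity)]
    nlinarith [Real.pi_lt_d2]
  -- summability facts
  have hSsummand_nonneg : ∀ n : ℕ, (0:ℝ) ≤ 2 * ρ₃ ^ (n + 2) / (1 + ((n:ℝ)+1)*α) := by
    intro n
    have := hdenom n
    positivity
  have hgeo2 : Summable (fun n : ℕ => 2 * ρ₃ ^ (n + 2)) :=
    ((summable_geometric_of_lt_one hρ0.le hρ1).mul_left (2*ρ₃^2)).congr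
      (fun n => by rw [pow_add]; ring)
  have hSsum : Summable (fun n : ℕ => 2 * ρ₃ ^ (n + 2) / (1 + ((n:ℝ)+1)*α)) := by
    refine Summable.of_nonneg_of_le hSsummand_nonneg (fun n => ?_) hgeo2
    calc 2 * ρ₃ ^ (n + 2) / (1 + ((n:ℝ)+1)*α) ≤ 2 * ρ₃ ^ (n + 2) / 1 := by
          apply div_le_div_of_nonneg_left (by positivity) (by norm_num) (hdenom n)
      _ = 2 * ρ₃ ^ (n + 2) := by ring
  have hQsum : Summable (fun n : ℕ => 2 * ((n:ℝ)+2) * ρ₃ ^ (n+1) / (1 + ((n:ℝ)+1)*α)) := by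
    have hbig : Summable (fun n : ℕ => 2 * ((n:ℝ)+2) * ρ₃ ^ (n+1)) := by
      have h1 : Summable (fun n : ℕ => (n:ℝ)^1 * ρ₃ ^ n) := by
        apply summable_pow_mul_geometric_of_norm_lt_one
        rw [Real.norm_eq_abs, _root_.abs_of_nonneg hρ0.le]
        exact hρ1
      have h2 : Summable (fun n : ℕ => ρ₃ ^ n) := summable_geometric_of_lt_one hρ0.le hρ1
      exact ((h1.mul_left (2*ρ₃)).add (h2.mul_left (4*ρ₃))).congr
        (fun n => by rw [pow_succ]; ring)
    refine Summable.of_nonneg_of_le (fun n => by have := hdenom n; positivity)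
      (fun n => ?_) hbig
    calc 2 * ((n:ℝ)+2) * ρ₃ ^ (n+1) / (1 + ((n:ℝ)+1)*α)
        ≤ 2 * ((n:ℝ)+2) * ρ₃ ^ (n+1) / 1 := by
          apply div_le_div_of_nonneg_left (by positivity) (by norm_num) (hdenom n)
      _ = 2 * ((n:ℝ)+2) * ρ₃ ^ (n+1) := by ring
  have hQ : (∑' n : ℕ, 2 * ((n:ℝ)+2) * ρ₃ ^ (n+1) / (1 + ((n:ℝ)+1)*α)) = c := by
    rw [hcdef]; linarith [hroot]
  -- tail sums
  have hzball1 : ∀ z : ℂ, ‖z‖ ≤ ρ₃ → z ∈ Metric.ball (0:ℂ) 1 := by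
    intro z hz
    rw [Metric.mem_ball, dist_zero_right]
    exact lt_of_le_of_lt hz hρ1
  have htail : ∀ z ∈ Metric.ball (0:ℂ) 1,
      HasSum (fun n : ℕ => a (n+2) * z^(n+2) + (starRingEnd ℂ) (b (n+2) * z^(n+2)))
        (h z + (starRingEnd ℂ) (g z) - z) := by
    intro z hz
    have h1 : HasSum (fun n : ℕ => a (n+2) * z^(n+2)) (h z - z) := by
      have := (hasSum_nat_add_iff' (f := fun n : ℕ => a n * z^n) 2).mpr (hhsum z hz)
      simpa [Finset.sum_range_succ, ha0, ha1] using this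
    have h2 : HasSum (fun n : ℕ => (starRingEnd ℂ) (b (n+2) * z^(n+2)))
        ((starRingEnd ℂ) (g z)) := by
      have h3 : HasSum (fun n : ℕ => b (n+2) * z^(n+2)) (g z) := by
        have := (hasSum_nat_add_iff' (f := fun n : ℕ => b n * z^n) 2).mpr (hgsum z hz)
        simpa [Finset.sum_range_succ, hb0, hb1] using this
      simp only [starRingEnd_apply]
      exact h3.star
    have h4 := h1.add h2
    convert h4 using 1
    ring
  -- termwise norm bound for the difference estimate
  have habs : ∀ (n : ℕ) (t : ℂ),
      ‖a (n+2) * t + (starRingEnd ℂ) (b (n+2) * t)‖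
        ≤ (2 / (1 + ((n:ℝ)+1)*α)) * ‖t‖ := by
    intro n t
    refine le_trans (norm_add_le _ _) ?_
    have e1 : ‖(starRingEnd ℂ) (b (n+2) * t)‖ = ‖b (n+2) * t‖ := by
      rw [Complex.norm_conj]
    rw [e1, norm_mul, norm_mul]
    have := hco n
    have ht : (0:ℝ) ≤ ‖t‖ := norm_nonneg t
    nlinarith [norm_nonneg (a (n+2)), norm_nonneg (b (n+2))]
  -- estimate 1 : distance to identity
  have hDS : ∀ z : ℂ, ‖z‖ ≤ ρ₃ → ‖h z + (starRingEnd ℂ) (g z) - z‖ ≤ S := by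
    intro z hz
    have ht := htail z (hzball1 z hz)
    have hterm : ∀ n : ℕ, ‖a (n+2) * z^(n+2) + (starRingEnd ℂ) (b (n+2) * z^(n+2))‖
        ≤ 2 * ρ₃ ^ (n + 2) / (1 + ((n:ℝ)+1)*α) := by
      intro n
      refine le_trans (habs n (z^(n+2))) ?_
      rw [norm_pow]
      have h1 : ‖z‖^(n+2) ≤ ρ₃^(n+2) := pow_le_pow_left₀ (norm_nonneg z) hz (n+2)
      have h2 : (0:ℝ) < 1 + ((n:ℝ)+1)*α := lt_of_lt_of_le one_pos (hdenom n)
      rw [div_mul_eq_mul_div, mul_div_assoc, mul_div_assoc]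
      gcongr
    have hnormsum : Summable (fun n : ℕ =>
        ‖a (n+2) * z^(n+2) + (starRingEnd ℂ) (b (n+2) * z^(n+2))‖) :=
      Summable.of_nonneg_of_le (fun n => norm_nonneg _) hterm hSsum
    calc ‖h z + (starRingEnd ℂ) (g z) - z‖
        = ‖∑' n : ℕ, (a (n+2) * z^(n+2) + (starRingEnd ℂ) (b (n+2) * z^(n+2)))‖ := by
          rw [ht.tsum_eq]
      _ ≤ ∑' n : ℕ, ‖a (n+2) * z^(n+2) + (starRingEnd ℂ) (b (n+2) * z^(n+2))‖ :=
          norm_tsum_le_tsum_norm hnormsum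
      _ ≤ S := by
          rw [hSdef]
          exact Summable.tsum_le_tsum hterm hnormsum hSsum
  -- estimate 2 : Lipschitz
  have hLip : ∀ z₁ z₂ : ℂ, ‖z₁‖ ≤ ρ₃ → ‖z₂‖ ≤ ρ₃ →
      ‖(h z₁ + (starRingEnd ℂ) (g z₁) - z₁) - (h z₂ + (starRingEnd ℂ) (g z₂) - z₂)‖
        ≤ c * ‖z₁ - z₂‖ := by
    intro z₁ z₂ h1 h2
    have ht := (htail z₁ (hzball1 z₁ h1)).sub (htail z₂ (hzball1 z₂ h2))
    have he : ∀ n : ℕ,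
        (a (n+2) * z₁^(n+2) + (starRingEnd ℂ) (b (n+2) * z₁^(n+2)))
          - (a (n+2) * z₂^(n+2) + (starRingEnd ℂ) (b (n+2) * z₂^(n+2)))
        = a (n+2) * (z₁^(n+2) - z₂^(n+2))
          + (starRingEnd ℂ) (b (n+2) * (z₁^(n+2) - z₂^(n+2))) := by
      intro n
      rw [mul_sub, mul_sub, map_sub]
      ring
    have ht2 : HasSum (fun n : ℕ => a (n+2) * (z₁^(n+2) - z₂^(n+2))
        + (starRingEnd ℂ) (b (n+2) * (z₁^(n+2) - z₂^(n+2))))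
        ((h z₁ + (starRingEnd ℂ) (g z₁) - z₁) - (h z₂ + (starRingEnd ℂ) (g z₂) - z₂)) := by
      have heq : (fun n : ℕ =>
          (a (n+2) * z₁^(n+2) + (starRingEnd ℂ) (b (n+2) * z₁^(n+2)))
            - (a (n+2) * z₂^(n+2) + (starRingEnd ℂ) (b (n+2) * z₂^(n+2))))
          = fun n : ℕ => a (n+2) * (z₁^(n+2) - z₂^(n+2))
            + (starRingEnd ℂ) (b (n+2) * (z₁^(n+2) - z₂^(n+2))) := funext he
      rw [heq] at ht
      exact ht
    have hterm : ∀ n : ℕ, ‖a (n+2) * (z₁^(n+2) - z₂^(n+2))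
        + (starRingEnd ℂ) (b (n+2) * (z₁^(n+2) - z₂^(n+2)))‖
        ≤ (2 * ((n:ℝ)+2) * ρ₃ ^ (n+1) / (1 + ((n:ℝ)+1)*α)) * ‖z₁ - z₂‖ := by
      intro n
      refine le_trans (habs n _) ?_
      have hp := aux_pow_sub_pow z₁ z₂ h1 h2 n
      have h2d : (0:ℝ) < 1 + ((n:ℝ)+1)*α := lt_of_lt_of_le one_pos (hdenom n)
      calc (2 / (1 + ((n:ℝ)+1)*α)) * ‖z₁^(n+2) - z₂^(n+2)‖
          ≤ (2 / (1 + ((n:ℝ)+1)*α)) * (((n:ℝ)+2) * ρ₃^(n+1) * ‖z₁ - z₂‖) :=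
            mul_le_mul_of_nonneg_left hp (by positivity)
        _ = (2 * ((n:ℝ)+2) * ρ₃ ^ (n+1) / (1 + ((n:ℝ)+1)*α)) * ‖z₁ - z₂‖ := by ring
    have hQsum' : Summable (fun n : ℕ =>
        (2 * ((n:ℝ)+2) * ρ₃ ^ (n+1) / (1 + ((n:ℝ)+1)*α)) * ‖z₁ - z₂‖) :=
      hQsum.mul_right _
    have hnormsum : Summable (fun n : ℕ => ‖a (n+2) * (z₁^(n+2) - z₂^(n+2))
        + (starRingEnd ℂ) (b (n+2) * (z₁^(n+2) - z₂^(n+2)))‖) :=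
      Summable.of_nonneg_of_le (fun n => norm_nonneg _) hterm hQsum'
    calc ‖(h z₁ + (starRingEnd ℂ) (g z₁) - z₁) - (h z₂ + (starRingEnd ℂ) (g z₂) - z₂)‖
        = ‖∑' n : ℕ, (a (n+2) * (z₁^(n+2) - z₂^(n+2))
            + (starRingEnd ℂ) (b (n+2) * (z₁^(n+2) - z₂^(n+2))))‖ := by
          rw [ht2.tsum_eq]
      _ ≤ ∑' n : ℕ, ‖a (n+2) * (z₁^(n+2) - z₂^(n+2))
            + (starRingEnd ℂ) (b (n+2) * (z₁^(n+2) - z₂^(n+2)))‖ :=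
          norm_tsum_le_tsum_norm hnormsum
      _ ≤ ∑' n : ℕ, (2 * ((n:ℝ)+2) * ρ₃ ^ (n+1) / (1 + ((n:ℝ)+1)*α)) * ‖z₁ - z₂‖ :=
          Summable.tsum_le_tsum hterm hnormsum hQsum'
      _ = (∑' n : ℕ, 2 * ((n:ℝ)+2) * ρ₃ ^ (n+1) / (1 + ((n:ℝ)+1)*α)) * ‖z₁ - z₂‖ :=
          tsum_mul_right
      _ = c * ‖z₁ - z₂‖ := by rw [hQ]
  -- the covering argument via the Banach fixed point theorem
  intro w hw
  rw [Metric.mem_ball, dist_zero_right] at hw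
  set T : ℂ → ℂ := fun z => w + z - (h z + (starRingEnd ℂ) (g z)) with hTdef
  have hS0 : 0 ≤ S := by
    rw [hSdef]
    exact tsum_nonneg hSsummand_nonneg
  have hwS : ‖w‖ + S < c * ρ₃ := by linarith
  have hTmem : ∀ z : ℂ, ‖z‖ ≤ ρ₃ → ‖T z‖ < ρ₃ := by
    intro z hz
    have e1 : T z = w - (h z + (starRingEnd ℂ) (g z) - z) := by rw [hTdef]; ring
    have e2 : ‖T z‖ ≤ ‖w‖ + ‖h z + (starRingEnd ℂ) (g z) - z‖ := by
      rw [e1]; exact norm_sub_le _ _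
    have e3 : c * ρ₃ ≤ 1 * ρ₃ := mul_le_mul_of_nonneg_right hc1.le hρ0.le
    have := hDS z hz
    calc ‖T z‖ ≤ ‖w‖ + S := by linarith
      _ < c * ρ₃ := hwS
      _ ≤ ρ₃ := by linarith
  have hmaps : Set.MapsTo T (Metric.closedBall (0:ℂ) ρ₃) (Metric.closedBall (0:ℂ) ρ₃) := by
    intro z hz
    rw [Metric.mem_closedBall, dist_zero_right] at hz ⊢
    exact (hTmem z hz).le
  have hsc : IsComplete (Metric.closedBall (0:ℂ) ρ₃) :=
    Metric.isClosed_closedBall.isComplete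
  set K : NNReal := Real.toNNReal c with hK
  have hKc : (K : ℝ) = c := Real.coe_toNNReal c hc0.le
  have hcontr : ContractingWith K (hmaps.restrict T _ _) := by
    constructor
    · have : (K:ℝ) < 1 := by rw [hKc]; exact hc1
      exact_mod_cast this
    · refine LipschitzWith.of_dist_le_mul ?_
      rintro ⟨x, hx⟩ ⟨y, hy⟩
      rw [Metric.mem_closedBall, dist_zero_right] at hx hy
      have hdist : dist (hmaps.restrict T _ _ ⟨x, by
          rw [Metric.mem_closedBall, dist_zero_right]; exact hx⟩)
          (hmaps.restrict T _ _ ⟨y, by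
          rw [Metric.mem_closedBall, dist_zero_right]; exact hy⟩) = dist (T x) (T y) := rfl
      rw [hdist, Subtype.dist_eq, dist_eq_norm, dist_eq_norm, hKc]
      have e1 : T x - T y = -((h x + (starRingEnd ℂ) (g x) - x)
          - (h y + (starRingEnd ℂ) (g y) - y)) := by rw [hTdef]; ring
      rw [e1, norm_neg]
      exact hLip x y hx hy
  obtain ⟨y, hys, hfix, -, -⟩ := ContractingWith.exists_fixedPoint' hsc hmaps hcontr
    (x := 0) (by rw [Metric.mem_closedBall, dist_zero_right, norm_zero]; exact hρ0.le)
    (edist_ne_top _ _)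
  rw [Metric.mem_closedBall, dist_zero_right] at hys
  have hfix' : T y = y := hfix
  have hfy : h y + (starRingEnd ℂ) (g y) = w := by
    rw [hTdef] at hfix'
    simp only at hfix'
    linear_combination -hfix'
  refine ⟨y, ?_, hfy⟩
  rw [Metric.mem_ball, dist_zero_right]
  calc ‖y‖ = ‖T y‖ := by rw [hfix']
    _ < ρ₃ := hTmem y hys
end

section
/- Let M > 0 and α ≥ 0. Let f = h + conj(g) where h and g are analytic on the unit disc D with expansions h(z) = z + ∑_{n=2}^∞ aₙzⁿ and g(z) = ∑_{n=2}^∞ bₙzⁿ, suppose |f(z)| < M for all z ∈ D, and suppose |aₙ| + |bₙ| ≤ 2/(1 + (n − 1)α) for all n ≥ 2. Then for every r ∈ (0, 1) and all points z₁, z₂ with |z₁| < r and |z₂| < r, one has |f(z₁) − f(z₂)| ≥ |z₁ − z₂| · ( π/(4M) − ∑_{n=2}^∞ 2n·r^{n−1}/(1 + (n − 1)α) ). -/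
open Complex Real MeasureTheory Finset Set

private lemma exp_int_integral (k : ℤ) :
    ∫ θ in Set.Ioc (0:ℝ) (2*π), Complex.exp ((k:ℂ) * θ * Complex.I) =
      if k = 0 then ((2*π : ℝ) : ℂ) else 0 := by
  have h2π : (0:ℝ) ≤ 2*π := by positivity
  rw [← intervalIntegral.integral_of_le h2π]
  rcases eq_or_ne k 0 with hk | hk
  · simp [hk]
  · have hc : (k:ℂ) * Complex.I ≠ 0 := by
      simp [hk, Complex.I_ne_zero]
    have heq : ∀ θ : ℝ, (k:ℂ) * θ * Complex.I = ((k:ℂ) * Complex.I) * θ := by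
      intro θ; ring
    simp_rw [heq]
    rw [integral_exp_mul_complex hc]
    have h1 : (k:ℂ) * Complex.I * ((2*π : ℝ):ℂ) = (k:ℂ) * (2 * (π:ℂ) * Complex.I) := by
      push_cast; ring
    rw [h1, Complex.exp_int_mul_two_pi_mul_I]
    simp [hk]

private lemma abs_exp_int (k : ℤ) (θ : ℝ) :
    ‖Complex.exp ((k:ℂ) * θ * Complex.I)‖ = 1 := by
  have : (k:ℂ) * θ = (((k:ℝ) * θ : ℝ) : ℂ) := by push_cast; ring
  rw [this, Complex.norm_exp_ofReal_mul_I]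

private lemma coeff_one_bound (M : ℝ) (h g : ℂ → ℂ) (a b : ℕ → ℂ)
    (hhsum : ∀ z ∈ Metric.ball (0:ℂ) 1, HasSum (fun n : ℕ => a n * z ^ n) (h z))
    (hgsum : ∀ z ∈ Metric.ball (0:ℂ) 1, HasSum (fun n : ℕ => b n * z ^ n) (g z))
    (hab : ∀ n : ℕ, ‖a n‖ + ‖b n‖ ≤ 2)
    (hbound : ∀ z ∈ Metric.ball (0:ℂ) 1,
      ‖h z + starRingEnd ℂ (g z)‖ < M)
    (r : ℝ) (hr0 : 0 ≤ r) (hr1 : r < 1) :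
    ‖a 1‖ * r ≤ M := by
  classical
  set μ : Measure ℝ := volume.restrict (Set.Ioc (0:ℝ) (2*π)) with hμ
  have hπ : (0:ℝ) < π := Real.pi_pos
  have hμuniv : (μ Set.univ).toReal = 2*π := by
    rw [hμ, Measure.restrict_apply_univ, Real.volume_Ioc]
    rw [ENNReal.toReal_ofReal (by nlinarith : (0:ℝ) ≤ 2*π - 0)]
    ring
  haveI : IsFiniteMeasure μ := by
    constructor
    rw [hμ, Measure.restrict_apply_univ, Real.volume_Ioc]
    exact ENNReal.ofReal_lt_top
  set z : ℝ → ℂ := fun θ => (r : ℂ) * Complex.exp (θ * Complex.I) with hz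
  have hzball : ∀ θ : ℝ, z θ ∈ Metric.ball (0:ℂ) 1 := by
    intro θ
    simp only [hz, Metric.mem_ball, dist_zero_right, norm_mul,
      Complex.norm_exp_ofReal_mul_I, mul_one, Complex.norm_real, Real.norm_eq_abs, _root_.abs_of_nonneg hr0]
    exact hr1
  set F : ℕ → ℝ → ℂ := fun n θ =>
    a n * (r:ℂ) ^ n * Complex.exp (((((n:ℤ) - 1 : ℤ)):ℂ) * θ * Complex.I)
      + (starRingEnd ℂ) (b n) * (r:ℂ) ^ n
        * Complex.exp ((((-((n:ℤ)+1) : ℤ)):ℂ) * θ * Complex.I) with hF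
  -- pointwise sum
  have hFsum : ∀ θ : ℝ, HasSum (fun n => F n θ)
      ((h (z θ) + starRingEnd ℂ (g (z θ))) * Complex.exp (-(θ * Complex.I))) := by
    intro θ
    have h1 : HasSum (fun n => a n * (z θ) ^ n * Complex.exp (-(θ * Complex.I)))
        (h (z θ) * Complex.exp (-(θ * Complex.I))) :=
      (hhsum _ (hzball θ)).mul_right _
    have h2 : HasSum (fun n => (starRingEnd ℂ) (b n * (z θ) ^ n)
          * Complex.exp (-(θ * Complex.I)))
        ((starRingEnd ℂ) (g (z θ)) * Complex.exp (-(θ * Complex.I))) :=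
      (Complex.hasSum_conj'.mpr (hgsum _ (hzball θ))).mul_right _
    have hadd := h1.add h2
    rw [← add_mul] at hadd
    convert hadd using 2 with n
    have hzn : (z θ) ^ n = (r:ℂ) ^ n * Complex.exp ((n : ℂ) * (θ:ℂ) * Complex.I) := by
      rw [hz, mul_pow, ← Complex.exp_nat_mul]
      ring_nf
    simp only [hF, hzn, map_mul, map_pow, Complex.conj_ofReal]
    have hconj : (starRingEnd ℂ) (Complex.exp ((n : ℂ) * (θ:ℂ) * Complex.I)) =
        Complex.exp (-((n:ℂ) * (θ:ℂ) * Complex.I)) := by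
      rw [← Complex.exp_conj]
      congr 1
      simp [Complex.ext_iff]
    rw [hconj]
    have e1 : ((((n:ℤ) - 1 : ℤ)):ℂ) * (θ:ℂ) * Complex.I
        = (n:ℂ)*(θ:ℂ)*Complex.I + (-((θ:ℂ)*Complex.I)) := by push_cast; ring
    have e2 : (((-((n:ℤ)+1) : ℤ)):ℂ) * (θ:ℂ) * Complex.I
        = (-((n:ℂ)*(θ:ℂ)*Complex.I)) + (-((θ:ℂ)*Complex.I)) := by push_cast; ring
    rw [e1, e2, Complex.exp_add, Complex.exp_add]
    ring
  -- continuity and integrability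
  have hFcont : ∀ n, Continuous (F n) := by
    intro n
    apply Continuous.add <;> exact
      (continuous_const.mul ((Complex.continuous_exp.comp
        ((continuous_const.mul (Complex.continuous_ofReal)).mul continuous_const))))
  have hFint : ∀ n, Integrable (F n) μ := fun n => (hFcont n).integrableOn_Ioc
  -- norm bound
  have hFnorm : ∀ n θ, ‖F n θ‖ ≤ 2 * r ^ n := by
    intro n θ
    have e1 := abs_exp_int ((n:ℤ) - 1) θ
    have e2 := abs_exp_int (-((n:ℤ)+1)) θ
    calc ‖F n θ‖ ≤ ‖a n * (r:ℂ) ^ n * Complex.exp (((((n:ℤ) - 1 : ℤ)):ℂ) * θ * Complex.I)‖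
          + ‖(starRingEnd ℂ) (b n) * (r:ℂ) ^ n
              * Complex.exp ((((-((n:ℤ)+1) : ℤ)):ℂ) * θ * Complex.I)‖ := norm_add_le _ _
      _ = ‖a n‖ * r ^ n + ‖b n‖ * r ^ n := by
          simp only [norm_mul, norm_pow, Complex.norm_real, Real.norm_eq_abs,
            _root_.abs_of_nonneg hr0, e1, e2, mul_one, Complex.norm_conj]
      _ = (‖a n‖ + ‖b n‖) * r ^ n := by ring
      _ ≤ 2 * r ^ n := by
          have : (0:ℝ) ≤ r ^ n := by positivity
          nlinarith [hab n]
  have hIntNorm : ∀ n, (∫ θ, ‖F n θ‖ ∂μ) ≤ (4*π) * r ^ n := by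
    intro n
    calc (∫ θ, ‖F n θ‖ ∂μ) ≤ ∫ _θ, 2 * r ^ n ∂μ :=
          integral_mono (hFint n).norm (integrable_const _) (fun θ => hFnorm n θ)
      _ = (μ Set.univ).toReal * (2 * r ^ n) := by rw [integral_const]; simp [smul_eq_mul, measureReal_def]
      _ = (4*π) * r ^ n := by rw [hμuniv]; ring
  have hSummInt : Summable (fun n => ∫ θ, ‖F n θ‖ ∂μ) := by
    apply Summable.of_nonneg_of_le (fun n => integral_nonneg fun θ => norm_nonneg _) hIntNorm
    exact (summable_geometric_of_lt_one hr0 hr1).mul_left _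
  have hHasSum := hasSum_integral_of_summable_integral_norm hFint hSummInt
  -- evaluate individual integrals
  have hIval : ∀ n, (∫ θ, F n θ ∂μ) = if n = 1 then a 1 * r * ((2*π:ℝ):ℂ) else 0 := by
    intro n
    have i1 : Integrable (fun θ : ℝ =>
        a n * (r:ℂ) ^ n * Complex.exp (((((n:ℤ) - 1 : ℤ)):ℂ) * θ * Complex.I)) μ := by
      apply Continuous.integrableOn_Ioc
      exact continuous_const.mul ((Complex.continuous_exp.comp
        ((continuous_const.mul (Complex.continuous_ofReal)).mul continuous_const)))
    have i2 : Integrable (fun θ : ℝ =>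
        (starRingEnd ℂ) (b n) * (r:ℂ) ^ n
          * Complex.exp ((((-((n:ℤ)+1) : ℤ)):ℂ) * θ * Complex.I)) μ := by
      apply Continuous.integrableOn_Ioc
      exact continuous_const.mul ((Complex.continuous_exp.comp
        ((continuous_const.mul (Complex.continuous_ofReal)).mul continuous_const)))
    simp only [hF]
    rw [integral_add i1 i2, integral_const_mul, integral_const_mul]
    rw [hμ]
    rw [exp_int_integral ((n:ℤ) - 1), exp_int_integral (-((n:ℤ)+1))]
    have hne : -((n:ℤ)+1) ≠ 0 := by omega
    rcases eq_or_ne n 1 with hn | hn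
    · subst hn
      rw [if_neg hne, if_pos (by norm_num : ((1:ℕ):ℤ) - 1 = 0), if_pos rfl]
      ring
    · have hn' : (n:ℤ) - 1 ≠ 0 := by omega
      rw [if_neg hn', if_neg hne, if_neg hn]
      ring
  -- the total integral
  have hval : (∫ θ, (∑' n, F n θ) ∂μ) = a 1 * r * ((2*π:ℝ):ℂ) := by
    have h2 : HasSum (fun n => if n = 1 then a 1 * (r:ℂ) * ((2*π:ℝ):ℂ) else 0)
        (a 1 * (r:ℂ) * ((2*π:ℝ):ℂ)) := hasSum_ite_eq 1 _
    have h1' := hHasSum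
    simp only [hIval] at h1'
    exact h1'.unique h2
  -- bound the total integral
  have hle : ‖∫ θ, (∑' n, F n θ) ∂μ‖ ≤ M * (2*π) := by
    have := norm_integral_le_of_norm_le_const (μ := μ)
      (f := fun θ => ∑' n, F n θ) (C := M) ?_
    · rwa [measureReal_def, hμuniv] at this
    · apply Filter.Eventually.of_forall
      intro θ
      show ‖∑' (n : ℕ), F n θ‖ ≤ M
      rw [(hFsum θ).tsum_eq]
      have habs : ‖Complex.exp (-((θ:ℂ) * Complex.I))‖ = 1 := by
        have : -((θ:ℂ) * Complex.I) = (((-θ : ℝ)):ℂ) * Complex.I := by push_cast; ring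
        rw [this, Complex.norm_exp_ofReal_mul_I]
      rw [norm_mul, habs, mul_one]
      exact le_of_lt (hbound _ (hzball θ))
  rw [hval] at hle
  have er : |r| = r := abs_of_nonneg hr0
  have epi : |2*π| = 2*π := abs_of_nonneg (by positivity)
  rw [norm_mul, norm_mul, Complex.norm_real, Complex.norm_real, Real.norm_eq_abs,
    Real.norm_eq_abs, er, epi] at hle
  have h2π : (0:ℝ) < 2*π := by positivity
  calc ‖a 1‖ * r = ‖a 1‖ * r * (2*π) / (2*π) := by
        field_simp
    _ ≤ M * (2*π) / (2*π) := by gcongr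
    _ = M := by field_simp

private lemma pow_diff_bound {x y : ℂ} {r : ℝ} (hx : ‖x‖ ≤ r)
    (hy : ‖y‖ ≤ r) (m : ℕ) :
    ‖x ^ m - y ^ m‖ ≤ m * r ^ (m - 1) * ‖x - y‖ := by
  have hr : 0 ≤ r := (norm_nonneg x).trans hx
  rw [← geom_sum₂_mul, norm_mul]
  apply mul_le_mul_of_nonneg_right _ (norm_nonneg _)
  calc ‖∑ i ∈ Finset.range m, x ^ i * y ^ (m - 1 - i)‖
      ≤ ∑ i ∈ Finset.range m, ‖x ^ i * y ^ (m - 1 - i)‖ :=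
        norm_sum_le _ _
    _ ≤ ∑ _i ∈ Finset.range m, r ^ (m - 1) := by
        apply Finset.sum_le_sum
        intro i hi
        rw [Finset.mem_range] at hi
        have hsplit : i + (m - 1 - i) = m - 1 := by omega
        rw [norm_mul, norm_pow, norm_pow]
        calc ‖x‖ ^ i * ‖y‖ ^ (m - 1 - i)
            ≤ r ^ i * r ^ (m - 1 - i) :=
              mul_le_mul (pow_le_pow_left₀ (norm_nonneg _) hx i)
                (pow_le_pow_left₀ (norm_nonneg _) hy _) (by positivity) (by positivity)
          _ = r ^ (m - 1) := by rw [← pow_add, hsplit]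
    _ = m * r ^ (m - 1) := by simp [Finset.sum_const, mul_comm]

/-- Distance-distortion lower bound under the sharp coefficient bounds of the
class `G_{k,H}(α,1)`: for `r ∈ (0,1)` and `|z₁|, |z₂| < r`,
`|f(z₁) - f(z₂)| ≥ |z₁ - z₂| (π/(4M) - ∑_{n≥2} 2n r^{n-1}/(1 + (n-1)α))`. -/
theorem landau_GkHa_lowerBound (M α : ℝ) (hM : 0 < M) (hα : 0 ≤ α)
    (h g : ℂ → ℂ) (a b : ℕ → ℂ)
    (hhsum : ∀ z ∈ Metric.ball (0:ℂ) 1, HasSum (fun n : ℕ => a n * z ^ n) (h z))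
    (hgsum : ∀ z ∈ Metric.ball (0:ℂ) 1, HasSum (fun n : ℕ => b n * z ^ n) (g z))
    (ha0 : a 0 = 0) (ha1 : a 1 = 1) (hb0 : b 0 = 0) (hb1 : b 1 = 0)
    (hcoef : ∀ n : ℕ, 2 ≤ n →
      ‖a n‖ + ‖b n‖ ≤ 2 / (1 + ((n : ℝ) - 1) * α))
    (hbound : ∀ z ∈ Metric.ball (0:ℂ) 1,
      ‖h z + starRingEnd ℂ (g z)‖ < M) :
    ∀ r ∈ Set.Ioo (0:ℝ) 1, ∀ z₁ z₂ : ℂ, ‖z₁‖ < r → ‖z₂‖ < r →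
      ‖(h z₁ + starRingEnd ℂ (g z₁)) - (h z₂ + starRingEnd ℂ (g z₂))‖ ≥
        ‖z₁ - z₂‖ *
          (Real.pi / (4 * M)
            - ∑' n : ℕ, 2 * ((n : ℝ) + 2) * r ^ (n + 1) / (1 + ((n : ℝ) + 1) * α)) := by
  intro r hr z₁ z₂ hz₁ hz₂
  obtain ⟨hr0, hr1⟩ := hr
  have hr0' : (0:ℝ) ≤ r := le_of_lt hr0
  -- uniform coefficient bound
  have hab : ∀ n : ℕ, ‖a n‖ + ‖b n‖ ≤ 2 := by
    intro n
    match n with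
    | 0 => simp [ha0, hb0]
    | 1 => simp [ha1, hb1]
    | (m+2) =>
      refine (hcoef (m+2) (by omega)).trans ?_
      have hden : (1:ℝ) ≤ 1 + (((m+2:ℕ) : ℝ) - 1) * α := by
        have : (0:ℝ) ≤ (((m+2:ℕ) : ℝ) - 1) * α := by
          apply mul_nonneg _ hα
          push_cast; linarith
        linarith
      exact div_le_self (by norm_num) hden
  -- M ≥ 4/5
  have hM45 : (4/5 : ℝ) ≤ M := by
    have := coeff_one_bound M h g a b hhsum hgsum hab hbound (4/5)
      (by norm_num) (by norm_num)
    rwa [ha1, norm_one, one_mul] at this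
  have hπM : Real.pi / (4*M) ≤ 1 := by
    rw [div_le_one (by linarith)]
    have := Real.pi_lt_d2
    linarith
  have hz₁b : z₁ ∈ Metric.ball (0:ℂ) 1 := by
    simp only [Metric.mem_ball, dist_zero_right]
    exact lt_trans hz₁ hr1
  have hz₂b : z₂ ∈ Metric.ball (0:ℂ) 1 := by
    simp only [Metric.mem_ball, dist_zero_right]
    exact lt_trans hz₂ hr1
  set D : ℂ := (h z₁ + starRingEnd ℂ (g z₁)) - (h z₂ + starRingEnd ℂ (g z₂)) with hD
  set c : ℕ → ℂ := fun n =>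
    (a n * z₁ ^ n - a n * z₂ ^ n)
      + (starRingEnd ℂ) (b n * z₁ ^ n - b n * z₂ ^ n) with hc
  have hcsum : HasSum c D := by
    have h1 : HasSum (fun n => a n * z₁ ^ n - a n * z₂ ^ n) (h z₁ - h z₂) :=
      (hhsum z₁ hz₁b).sub (hhsum z₂ hz₂b)
    have h2 : HasSum (fun n => (starRingEnd ℂ) (b n * z₁ ^ n - b n * z₂ ^ n))
        ((starRingEnd ℂ) (g z₁ - g z₂)) :=
      Complex.hasSum_conj'.mpr ((hgsum z₁ hz₁b).sub (hgsum z₂ hz₂b))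
    have := h1.add h2
    convert this using 1
    rw [hD, map_sub]
    ring
  have hTail : HasSum (fun n => c (n+2)) (D - (z₁ - z₂)) := by
    have h2 := (hasSum_nat_add_iff' (f := c) 2).mpr hcsum
    have hsum2 : ∑ i ∈ Finset.range 2, c i = z₁ - z₂ := by
      rw [Finset.sum_range_succ, Finset.sum_range_one, hc]
      simp [ha0, ha1, hb0, hb1]
    rwa [hsum2] at h2
  -- summability of the majorant
  have hgeo : Summable (fun n : ℕ => 2 * ((n : ℝ) + 2) * r ^ (n + 1)) := by
    have h1 : Summable (fun n : ℕ => (n:ℝ) ^ 1 * r ^ n) :=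
      summable_pow_mul_geometric_of_norm_lt_one 1
        (by rw [Real.norm_eq_abs, (show |r| = r from abs_of_nonneg hr0')]; exact hr1)
    have h2 : Summable (fun n : ℕ => r ^ n) := summable_geometric_of_lt_one hr0' hr1
    apply Summable.congr ((h1.mul_left (2*r)).add (h2.mul_left (4*r)))
    intro n
    rw [pow_succ]
    ring
  have husm : Summable (fun n : ℕ =>
      2 * ((n : ℝ) + 2) * r ^ (n + 1) / (1 + ((n : ℝ) + 1) * α)) := by
    apply Summable.of_nonneg_of_le (fun n => by positivity) (fun n => ?_) hgeo
    apply div_le_self (by positivity)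
    have : (0:ℝ) ≤ ((n:ℝ)+1)*α := by positivity
    linarith
  set S : ℝ := ∑' n : ℕ, 2 * ((n : ℝ) + 2) * r ^ (n + 1) / (1 + ((n : ℝ) + 1) * α)
    with hS
  -- termwise bound
  have hterm : ∀ n : ℕ, ‖c (n+2)‖ ≤ ‖z₁ - z₂‖ *
      (2 * ((n : ℝ) + 2) * r ^ (n + 1) / (1 + ((n : ℝ) + 1) * α)) := by
    intro n
    have hz₁r : ‖z₁‖ ≤ r := le_of_lt hz₁
    have hz₂r : ‖z₂‖ ≤ r := le_of_lt hz₂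
    have hpow := pow_diff_bound hz₁r hz₂r (n+2)
    have hm1 : (n+2) - 1 = n + 1 := by omega
    rw [hm1] at hpow
    have hcf := hcoef (n+2) (by omega)
    have hcast : ((n+2:ℕ) : ℝ) - 1 = (n:ℝ) + 1 := by push_cast; ring
    rw [hcast] at hcf
    have hq : (0:ℝ) < 1 + ((n:ℝ)+1)*α := by positivity
    calc ‖c (n+2)‖
        ≤ (‖a (n+2)‖ + ‖b (n+2)‖)
            * ‖z₁ ^ (n+2) - z₂ ^ (n+2)‖ := by
          rw [hc]
          simp only [← mul_sub]
          calc ‖a (n+2) * (z₁ ^ (n+2) - z₂ ^ (n+2))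
                + (starRingEnd ℂ) (b (n+2) * (z₁ ^ (n+2) - z₂ ^ (n+2)))‖
              ≤ ‖a (n+2) * (z₁ ^ (n+2) - z₂ ^ (n+2))‖
                + ‖(starRingEnd ℂ) (b (n+2) * (z₁ ^ (n+2) - z₂ ^ (n+2)))‖ :=
                norm_add_le _ _
            _ = (‖a (n+2)‖ + ‖b (n+2)‖)
                  * ‖z₁ ^ (n+2) - z₂ ^ (n+2)‖ := by
                simp only [norm_mul, map_mul, Complex.norm_conj]
                ring
      _ ≤ (2 / (1 + ((n:ℝ)+1)*α))
            * (((n+2:ℕ):ℝ) * r ^ (n+1) * ‖z₁ - z₂‖) := by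
          apply mul_le_mul hcf hpow (norm_nonneg _) (by positivity)
      _ = ‖z₁ - z₂‖ *
            (2 * ((n : ℝ) + 2) * r ^ (n + 1) / (1 + ((n : ℝ) + 1) * α)) := by
          push_cast
          ring
  have hTb : ‖D - (z₁ - z₂)‖ ≤ ‖z₁ - z₂‖ * S := by
    have hu : HasSum (fun n : ℕ => ‖z₁ - z₂‖ *
        (2 * ((n : ℝ) + 2) * r ^ (n + 1) / (1 + ((n : ℝ) + 1) * α)))
        (‖z₁ - z₂‖ * S) := husm.hasSum.mul_left _
    have := tsum_of_norm_bounded hu hterm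
    rwa [hTail.tsum_eq] at this
  -- final chain
  have habsnn : (0:ℝ) ≤ ‖z₁ - z₂‖ := norm_nonneg _
  have hDn : ‖z₁ - z₂‖ - ‖D - (z₁ - z₂)‖ ≤ ‖D‖ := by
    have h1 := norm_sub_le D (D - (z₁ - z₂))
    rw [sub_sub_cancel] at h1
    linarith
  have hTb' : ‖D - (z₁ - z₂)‖ ≤ ‖z₁ - z₂‖ * S := by
    exact hTb
  rw [ge_iff_le]
  calc ‖z₁ - z₂‖ * (Real.pi / (4*M) - S)
      ≤ ‖z₁ - z₂‖ * (1 - S) :=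
        mul_le_mul_of_nonneg_left (by linarith) (norm_nonneg _)
    _ = ‖z₁ - z₂‖ - ‖z₁ - z₂‖ * S := by ring
    _ ≤ ‖z₁ - z₂‖ - ‖D - (z₁ - z₂)‖ := by linarith [hTb']
    _ ≤ ‖D‖ := hDn
end

section
/- Let M > 0. Let f = h + conj(g) where h and g are analytic on the unit disc D with expansions h(z) = z + ∑_{n=2}^∞ aₙzⁿ and g(z) = ∑_{n=2}^∞ bₙzⁿ, suppose |f(z)| < M for all z ∈ D, and suppose |aₙ| + |bₙ| ≤ 2 for all n ≥ 2 (the case α = 0). Then f is univalent (injective) on D_{ρ₃} with ρ₃ = 1 − √(32M(π + 8M)) / (2(π + 8M)), and the image f(D_{ρ₃}) contains the disc {w ∈ ℂ : |w| < R₃} with R₃ = (π/(4M))·ρ₃ − 2·ρ₃²/(1 − ρ₃). -/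
open Complex Metric Set Finset MeasureTheory

section LandauAux

lemma landau_pow_sub_pow_norm_le (z w : ℂ) {ρ : ℝ} (hz : ‖z‖ ≤ ρ) (hw : ‖w‖ ≤ ρ) (n : ℕ) :
    ‖z ^ n - w ^ n‖ ≤ n * ρ ^ (n - 1) * ‖z - w‖ := by
  have hρ : 0 ≤ ρ := le_trans (norm_nonneg z) hz
  rw [← geom_sum₂_mul, norm_mul]
  gcongr ?_ * _
  calc ‖∑ i ∈ range n, z ^ i * w ^ (n - 1 - i)‖
      ≤ ∑ i ∈ range n, ‖z ^ i * w ^ (n - 1 - i)‖ := norm_sum_le _ _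
    _ ≤ ∑ i ∈ range n, ρ ^ (n - 1) := by
        apply Finset.sum_le_sum
        intro i hi
        have hin : i < n := Finset.mem_range.mp hi
        rw [norm_mul, norm_pow, norm_pow]
        calc ‖z‖ ^ i * ‖w‖ ^ (n - 1 - i) ≤ ρ ^ i * ρ ^ (n - 1 - i) := by gcongr
          _ = ρ ^ (n - 1) := by rw [← pow_add]; congr 1; omega
    _ = n * ρ ^ (n - 1) := by simp [Finset.sum_const, mul_comm]

lemma landau_hasSum_geom_sq {ρ : ℝ} (h0 : 0 ≤ ρ) (h1 : ρ < 1) :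
    HasSum (fun n : ℕ => ((n : ℝ) + 1) * ρ ^ n) (1 / (1 - ρ) ^ 2) := by
  have hρ : ‖ρ‖ < 1 := by rwa [Real.norm_eq_abs, _root_.abs_of_nonneg h0]
  have h2 := hasSum_coe_mul_geometric_of_norm_lt_one (𝕜 := ℝ) hρ
  have h3 := hasSum_geometric_of_lt_one h0 h1
  have h4 := h2.add h3
  have he : (fun n : ℕ => (n : ℝ) * ρ ^ n + ρ ^ n) = fun n : ℕ => ((n : ℝ) + 1) * ρ ^ n := by
    funext n; ring
  rw [he] at h4
  convert h4 using 1
  have hne : (1 : ℝ) - ρ ≠ 0 := by linarith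
  · rfl
  · field_simp; ring

lemma landau_hasSum_A {ρ : ℝ} (h0 : 0 ≤ ρ) (h1 : ρ < 1) :
    HasSum (fun n : ℕ => ((n : ℝ) + 2) * ρ ^ (n + 1)) (1 / (1 - ρ) ^ 2 - 1) := by
  set F : ℕ → ℝ := fun n : ℕ => ((n : ℝ) + 1) * ρ ^ n with hF
  have base : HasSum F (1 / (1 - ρ) ^ 2) := landau_hasSum_geom_sq h0 h1
  have h4 : HasSum (fun n => F (n + 1)) (1 / (1 - ρ) ^ 2 - 1) := by
    rw [hasSum_nat_add_iff 1]
    have : (∑ i ∈ range 1, F i) = 1 := by simp [hF]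
    rw [this]
    simpa using base
  have he : (fun n : ℕ => ((n : ℝ) + 2) * ρ ^ (n + 1)) = fun n => F (n + 1) := by
    funext n; simp only [hF]; push_cast; ring
  rw [he]; exact h4

lemma landau_hasSum_B {ρ : ℝ} (h0 : 0 ≤ ρ) (h1 : ρ < 1) :
    HasSum (fun n : ℕ => ρ ^ (n + 2)) (ρ ^ 2 * (1 - ρ)⁻¹) := by
  have h3 := (hasSum_geometric_of_lt_one h0 h1).mul_left (ρ ^ 2)
  have he : (fun n : ℕ => ρ ^ (n + 2)) = fun n : ℕ => ρ ^ 2 * ρ ^ n := by funext n; ring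
  rw [he]; exact h3

lemma landau_summable_nat_mul_pow {r : ℝ} (h0 : 0 ≤ r) (h1 : r < 1) :
    Summable (fun n : ℕ => (n : ℝ) * r ^ (n - 1)) := by
  rw [← summable_nat_add_iff 1]
  have := (landau_hasSum_geom_sq h0 h1).summable
  convert this using 2 with n
  case e'_5 => push_cast; simp
  all_goals rfl

lemma landau_tail_bound {c v : ℕ → ℂ} {S : ℂ} (hS : HasSum (fun n => c n * v n) S)
    {u : ℕ → ℝ} (hu : Summable u) (hb : ∀ n, ‖c (n + 2) * v (n + 2)‖ ≤ u n)
    (h0 : c 0 * v 0 = 0) : ‖S - c 1 * v 1‖ ≤ ∑' n, u n := by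
  set d : ℕ → ℂ := fun n => c n * v n with hd
  have he : HasSum (fun n => d (n + 2)) (S - ∑ i ∈ range 2, d i) := by
    rw [hasSum_nat_add_iff 2]; simpa using hS
  have hsum2 : (∑ i ∈ range 2, d i) = c 1 * v 1 := by
    simp [hd, Finset.sum_range_succ, h0]
  rw [hsum2] at he
  have hsumm : Summable (fun n => ‖d (n + 2)‖) :=
    hu.of_nonneg_of_le (fun n => norm_nonneg _) hb
  calc ‖S - c 1 * v 1‖ = ‖∑' n, d (n + 2)‖ := by rw [he.tsum_eq]
    _ ≤ ∑' n, ‖d (n + 2)‖ := norm_tsum_le_tsum_norm hsumm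
    _ ≤ ∑' n, u n := Summable.tsum_le_tsum hb hsumm hu

lemma landau_two_tails {a b : ℕ → ℂ} (hcoef : ∀ n : ℕ, 2 ≤ n → ‖a n‖ + ‖b n‖ ≤ 2)
    {v : ℕ → ℂ} {Sa Sb : ℂ}
    (hSa : HasSum (fun n => a n * v n) Sa) (hSb : HasSum (fun n => b n * v n) Sb)
    {w : ℕ → ℝ} (hw : Summable w) (hwnn : ∀ n, 0 ≤ w n)
    (hv : ∀ n, ‖v (n + 2)‖ ≤ w n)
    (h0a : a 0 * v 0 = 0) (h0b : b 0 * v 0 = 0) :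
    ‖Sa - a 1 * v 1‖ + ‖Sb - b 1 * v 1‖ ≤ 2 * ∑' n, w n := by
  set ua : ℕ → ℝ := fun n => ‖a (n + 2)‖ * w n with hua
  set ub : ℕ → ℝ := fun n => ‖b (n + 2)‖ * w n with hub
  have hanorm : ∀ n : ℕ, ‖a (n + 2)‖ ≤ 2 := fun n =>
    le_trans (le_add_of_nonneg_right (norm_nonneg _)) (hcoef (n + 2) (by omega))
  have hbnorm : ∀ n : ℕ, ‖b (n + 2)‖ ≤ 2 := fun n =>
    le_trans (le_add_of_nonneg_left (norm_nonneg _)) (hcoef (n + 2) (by omega))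
  have huas : Summable ua := by
    apply (hw.mul_left 2).of_nonneg_of_le (fun n => mul_nonneg (norm_nonneg _) (hwnn n))
    exact fun n => mul_le_mul_of_nonneg_right (hanorm n) (hwnn n)
  have hubs : Summable ub := by
    apply (hw.mul_left 2).of_nonneg_of_le (fun n => mul_nonneg (norm_nonneg _) (hwnn n))
    exact fun n => mul_le_mul_of_nonneg_right (hbnorm n) (hwnn n)
  have hba : ∀ n, ‖a (n + 2) * v (n + 2)‖ ≤ ua n := fun n => by
    rw [norm_mul]; exact mul_le_mul_of_nonneg_left (hv n) (norm_nonneg _)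
  have hbb : ∀ n, ‖b (n + 2) * v (n + 2)‖ ≤ ub n := fun n => by
    rw [norm_mul]; exact mul_le_mul_of_nonneg_left (hv n) (norm_nonneg _)
  have ta := landau_tail_bound hSa huas hba h0a
  have tb := landau_tail_bound hSb hubs hbb h0b
  have hsum : ∑' n, ua n + ∑' n, ub n ≤ 2 * ∑' n, w n := by
    rw [← Summable.tsum_add huas hubs, ← tsum_mul_left]
    apply Summable.tsum_le_tsum _ (huas.add hubs) (hw.mul_left 2)
    intro n
    have hj := mul_le_mul_of_nonneg_right (hcoef (n + 2) (by omega)) (hwnn n)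
    calc ua n + ub n = (‖a (n + 2)‖ + ‖b (n + 2)‖) * w n := by
          simp only [hua, hub]; ring
      _ ≤ 2 * w n := hj
  linarith [ta, tb]

lemma landau_power_series_hasDerivAt {c : ℕ → ℂ} (hc : ∀ n, ‖c n‖ ≤ 2) {F : ℂ → ℂ}
    (hFsum : ∀ z ∈ Metric.ball (0:ℂ) 1, HasSum (fun n : ℕ => c n * z ^ n) (F z))
    {z₀ : ℂ} (hz₀ : z₀ ∈ Metric.ball (0:ℂ) 1) :
    HasSum (fun n : ℕ => c n * (n * z₀ ^ (n - 1))) (∑' n : ℕ, c n * (n * z₀ ^ (n - 1)))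
      ∧ HasDerivAt F (∑' n : ℕ, c n * (n * z₀ ^ (n - 1))) z₀ := by
  rw [mem_ball_zero_iff] at hz₀
  set r : ℝ := (‖z₀‖ + 1) / 2 with hr
  have hr0 : 0 < r := by positivity
  have hr1 : r < 1 := by rw [hr]; linarith
  have hz₀r : ‖z₀‖ < r := by rw [hr]; linarith
  set u : ℕ → ℝ := fun n => 2 * ((n : ℝ) * r ^ (n - 1)) with hu
  have hus : Summable u := (landau_summable_nat_mul_pow hr0.le hr1).mul_left 2
  set t : Set ℂ := Metric.ball (0:ℂ) r with ht
  have hto : IsOpen t := Metric.isOpen_ball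
  have htc : IsPreconnected t := (convex_ball _ _).isPreconnected
  have hmem : z₀ ∈ t := by rwa [ht, mem_ball_zero_iff]
  have hder : ∀ n : ℕ, ∀ y ∈ t, HasDerivAt (fun z : ℂ => c n * z ^ n)
      (c n * (n * y ^ (n - 1))) y := by
    intro n y _
    exact (hasDerivAt_pow n y).const_mul (c n)
  have hbd : ∀ n : ℕ, ∀ y ∈ t, ‖c n * (n * y ^ (n - 1))‖ ≤ u n := by
    intro n y hy
    rw [ht, mem_ball_zero_iff] at hy
    rw [norm_mul, norm_mul, norm_pow, Complex.norm_natCast]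
    calc ‖c n‖ * ((n : ℝ) * ‖y‖ ^ (n - 1)) ≤ 2 * ((n : ℝ) * r ^ (n - 1)) := by
          gcongr
          exact hc n
      _ = u n := rfl
  have hsum0 : Summable fun n : ℕ => c n * z₀ ^ n :=
    (hFsum z₀ (by simpa [mem_ball_zero_iff])).summable
  have hD := hasDerivAt_tsum_of_isPreconnected hus hto htc hder hbd hmem hsum0 hmem
  have hSumD : Summable (fun n : ℕ => c n * (n * z₀ ^ (n - 1))) :=
    Summable.of_norm_bounded hus (fun n => hbd n z₀ hmem)
  refine ⟨hSumD.hasSum, ?_⟩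
  apply hD.congr_of_eventuallyEq
  have hb1 : Metric.ball (0:ℂ) 1 ∈ nhds z₀ :=
    Metric.isOpen_ball.mem_nhds (by simpa [mem_ball_zero_iff])
  filter_upwards [hb1] with w hw
  exact ((hFsum w hw).tsum_eq).symm

lemma landau_key_int (k : ℤ) : (∫ θ in (0:ℝ)..(2*Real.pi), Complex.exp (k * θ * I))
    = if k = 0 then (2*Real.pi : ℂ) else 0 := by
  rcases eq_or_ne k 0 with hk | hk
  · subst hk; simp
  · rw [if_neg hk]
    have hc : (k : ℂ) * I ≠ 0 := by
      simp [Complex.ext_iff, hk, I_ne_zero]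
    have he : ∀ θ : ℝ, Complex.exp (k * θ * I) = Complex.exp ((k * I) * θ) := by
      intro θ; ring_nf
    simp_rw [he]
    rw [integral_exp_mul_complex hc]
    have h1 : Complex.exp ((k:ℂ) * I * (2*Real.pi)) = 1 := by
      have := Complex.exp_int_mul_two_pi_mul_I k
      rw [← this]; ring_nf
    push_cast
    rw [h1]
    norm_num

lemma landau_M_ge_one (M : ℝ) (h g : ℂ → ℂ) (a b : ℕ → ℂ)
    (hhsum : ∀ z ∈ Metric.ball (0:ℂ) 1, HasSum (fun n : ℕ => a n * z ^ n) (h z))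
    (hgsum : ∀ z ∈ Metric.ball (0:ℂ) 1, HasSum (fun n : ℕ => b n * z ^ n) (g z))
    (ha1 : a 1 = 1)
    (habound : ∀ n, ‖a n‖ ≤ 2) (hbbound : ∀ n, ‖b n‖ ≤ 2)
    (hbound : ∀ z ∈ Metric.ball (0:ℂ) 1, ‖h z + (starRingEnd ℂ) (g z)‖ < M) :
    1 ≤ M := by
  have hπ := Real.pi_pos
  by_contra hlt
  push_neg at hlt
  have hM : 0 < M := lt_of_le_of_lt (norm_nonneg _) (hbound 0 (by simp))
  set r : ℝ := (M + 1) / 2 with hrdef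
  have hr0 : 0 < r := by positivity
  have hr1 : r < 1 := by rw [hrdef]; linarith
  have hMr : M < r := by rw [hrdef]; linarith
  set z : ℝ → ℂ := fun θ => (r : ℂ) * Complex.exp (θ * I) with hzdef
  have hzr : ∀ θ : ℝ, ‖z θ‖ = r := by
    intro θ
    rw [hzdef]
    simp [Complex.norm_exp_ofReal_mul_I, _root_.abs_of_nonneg hr0.le]
  have hz : ∀ θ : ℝ, z θ ∈ Metric.ball (0:ℂ) 1 := by
    intro θ; rw [mem_ball_zero_iff, hzr]; exact hr1
  set F : ℕ → ℝ → ℂ := fun n θ =>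
    (a n * (z θ) ^ n + (starRingEnd ℂ) (b n * (z θ) ^ n)) * Complex.exp (-(θ * I)) with hFdef
  have hexp1 : ∀ θ : ℝ, ‖Complex.exp (-(↑θ * I))‖ = 1 := by
    intro θ
    rw [show -((θ:ℂ) * I) = ((-θ : ℝ) : ℂ) * I by push_cast; ring,
      Complex.norm_exp_ofReal_mul_I]
  have hFsum : ∀ θ : ℝ, HasSum (fun n => F n θ)
      ((h (z θ) + (starRingEnd ℂ) (g (z θ))) * Complex.exp (-(θ * I))) := by
    intro θ
    have h1 := (hhsum _ (hz θ)).add ((hgsum _ (hz θ)).map (starRingEnd ℂ) continuous_star)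
    have h2 := h1.mul_right (Complex.exp (-(θ * I)))
    simpa [hFdef, Function.comp] using h2
  have hzcont : Continuous z := by
    apply continuous_const.mul
    exact Complex.continuous_exp.comp (Complex.continuous_ofReal.mul continuous_const)
  have hFcont : ∀ n, Continuous (F n) := by
    intro n
    apply Continuous.mul
    · exact (continuous_const.mul (hzcont.pow n)).add
        (continuous_star.comp (continuous_const.mul (hzcont.pow n)))
    · exact Complex.continuous_exp.comp
        ((Complex.continuous_ofReal.mul continuous_const).neg)
  have hFint : ∀ n, IntegrableOn (F n) (Ioc (0:ℝ) (2*Real.pi)) volume :=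
    fun n => (hFcont n).integrableOn_Ioc
  have hFnorm : ∀ n θ, ‖F n θ‖ ≤ 4 * r ^ n := by
    intro n θ
    rw [hFdef]
    simp only []
    rw [norm_mul, hexp1, mul_one]
    calc ‖a n * z θ ^ n + (starRingEnd ℂ) (b n * z θ ^ n)‖
        ≤ ‖a n * z θ ^ n‖ + ‖(starRingEnd ℂ) (b n * z θ ^ n)‖ := norm_add_le _ _
      _ = ‖a n‖ * r ^ n + ‖b n‖ * r ^ n := by
          rw [RCLike.norm_conj, norm_mul, norm_mul, norm_pow, hzr]
      _ ≤ 2 * r ^ n + 2 * r ^ n := by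
          gcongr
          · exact habound n
          · exact hbbound n
      _ = 4 * r ^ n := by ring
  have hInorm : ∀ n, (∫ θ in Ioc (0:ℝ) (2*Real.pi), ‖F n θ‖) ≤ (2*Real.pi) * (4 * r ^ n) := by
    intro n
    have h1 : (∫ θ in Ioc (0:ℝ) (2*Real.pi), ‖F n θ‖)
        ≤ ∫ _ in Ioc (0:ℝ) (2*Real.pi), (4 * r ^ n) := by
      apply setIntegral_mono_on (hFint n).norm _ measurableSet_Ioc
      · exact fun θ _ => hFnorm n θ
      · exact integrableOn_const (by rw [Real.volume_Ioc]; exact ENNReal.ofReal_ne_top)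
    calc (∫ θ in Ioc (0:ℝ) (2*Real.pi), ‖F n θ‖) ≤ _ := h1
      _ = (2*Real.pi) * (4 * r ^ n) := by
          rw [setIntegral_const, measureReal_def, Real.volume_Ioc, smul_eq_mul]
          rw [ENNReal.toReal_ofReal (by linarith)]
          ring
  have hsummable : Summable (fun n => ∫ θ in Ioc (0:ℝ) (2*Real.pi), ‖F n θ‖) := by
    apply Summable.of_nonneg_of_le (fun n => integral_nonneg (fun θ => norm_nonneg _)) hInorm
    exact ((summable_geometric_of_lt_one hr0.le hr1).mul_left 4).mul_left (2*Real.pi)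
  have key := hasSum_integral_of_summable_integral_norm
    (μ := volume.restrict (Ioc (0:ℝ) (2*Real.pi))) hFint hsummable
  have hIeq : ∀ n : ℕ, (∫ θ in Ioc (0:ℝ) (2*Real.pi), F n θ)
      = if n = 1 then ((2*Real.pi*r : ℝ) : ℂ) else 0 := by
    intro n
    rw [← intervalIntegral.integral_of_le (by positivity)]
    have hFrw : ∀ θ : ℝ, F n θ = (a n * r ^ n) * Complex.exp ((((n:ℤ) - 1 : ℤ) : ℂ) * θ * I)
        + ((starRingEnd ℂ) (b n) * r ^ n) * Complex.exp (((-(n:ℤ) - 1 : ℤ) : ℂ) * θ * I) := by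
      intro θ
      have e1 : Complex.exp (θ * I) ^ n * Complex.exp (-(θ * I))
          = Complex.exp ((((n:ℤ) - 1 : ℤ) : ℂ) * θ * I) := by
        rw [← Complex.exp_nat_mul, ← Complex.exp_add]
        congr 1
        push_cast
        ring
      have e2 : Complex.exp (-(θ * I)) ^ n * Complex.exp (-(θ * I))
          = Complex.exp (((-(n:ℤ) - 1 : ℤ) : ℂ) * θ * I) := by
        rw [← Complex.exp_nat_mul, ← Complex.exp_add]
        congr 1
        push_cast
        ring
      have hconjexp : (starRingEnd ℂ) (Complex.exp (θ * I)) = Complex.exp (-(θ * I)) := by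
        rw [← Complex.exp_conj, map_mul, Complex.conj_ofReal, Complex.conj_I]
        ring_nf
      rw [hFdef]
      simp only [hzdef]
      rw [map_mul, map_pow, map_mul, Complex.conj_ofReal, hconjexp, mul_pow, mul_pow]
      rw [← e1, ← e2]
      ring
    simp_rw [hFrw]
    have hi1 : IntervalIntegrable
        (fun θ : ℝ => (a n * r ^ n) * Complex.exp ((((n:ℤ) - 1 : ℤ) : ℂ) * θ * I))
        volume 0 (2*Real.pi) := by
      apply Continuous.intervalIntegrable
      exact continuous_const.mul (Complex.continuous_exp.comp
        ((continuous_const.mul Complex.continuous_ofReal).mul continuous_const))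
    have hi2 : IntervalIntegrable
        (fun θ : ℝ => ((starRingEnd ℂ) (b n) * r ^ n) * Complex.exp (((-(n:ℤ) - 1 : ℤ) : ℂ) * θ * I))
        volume 0 (2*Real.pi) := by
      apply Continuous.intervalIntegrable
      exact continuous_const.mul (Complex.continuous_exp.comp
        ((continuous_const.mul Complex.continuous_ofReal).mul continuous_const))
    rw [intervalIntegral.integral_add hi1 hi2]
    rw [intervalIntegral.integral_const_mul, intervalIntegral.integral_const_mul]
    rw [landau_key_int, landau_key_int]
    have hk2 : ¬ (-(n:ℤ) - 1 = 0) := by omega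
    rw [if_neg hk2, mul_zero, add_zero]
    rcases eq_or_ne n 1 with hn | hn
    · subst hn
      rw [if_pos rfl, if_pos (show ((1:ℕ):ℤ) - 1 = 0 by norm_num), ha1]
      push_cast
      ring
    · rw [if_neg hn, if_neg (by omega : ¬ ((n:ℤ) - 1 = 0)), mul_zero]
  have hIone : HasSum (fun n => ∫ θ in Ioc (0:ℝ) (2*Real.pi), F n θ) ((2*Real.pi*r : ℝ) : ℂ) := by
    have heq : (fun n => ∫ θ in Ioc (0:ℝ) (2*Real.pi), F n θ)
        = fun n => if n = 1 then ((2*Real.pi*r : ℝ) : ℂ) else 0 := funext hIeq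
    rw [heq]
    exact hasSum_ite_eq 1 _
  have hXval : (∫ θ in Ioc (0:ℝ) (2*Real.pi), ∑' n, F n θ) = ((2*Real.pi*r : ℝ) : ℂ) :=
    key.unique hIone
  have hXbound : ‖∫ θ in Ioc (0:ℝ) (2*Real.pi), ∑' n, F n θ‖ ≤ M * (2*Real.pi) := by
    rw [← intervalIntegral.integral_of_le (by positivity)]
    have hbd := intervalIntegral.norm_integral_le_of_norm_le_const
      (C := M) (f := fun θ : ℝ => ∑' n, F n θ) (a := 0) (b := 2*Real.pi) ?_
    · calc ‖∫ θ in (0:ℝ)..(2*Real.pi), ∑' n, F n θ‖ ≤ M * |2*Real.pi - 0| := hbd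
        _ = M * (2*Real.pi) := by rw [_root_.abs_of_nonneg (by linarith)]; ring_nf
    · intro θ _
      show ‖∑' n, F n θ‖ ≤ M
      rw [(hFsum θ).tsum_eq, norm_mul, hexp1 θ, mul_one]
      exact (hbound _ (hz θ)).le
  rw [hXval] at hXbound
  rw [Complex.norm_real, Real.norm_eq_abs, _root_.abs_of_nonneg (by positivity)] at hXbound
  nlinarith

end LandauAux

set_option maxHeartbeats 2000000 in
/-- Landau-type theorem for the case `α = 0`: with `|aₙ| + |bₙ| ≤ 2` for
`n ≥ 2` and `|f| < M`, `f = h + conj g` is injective on `D_{ρ₃}` with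
`ρ₃ = 1 - √(32M(π + 8M)) / (2(π + 8M))`, and `f(D_{ρ₃})` contains the disc of
radius `R₃ = (π/(4M)) ρ₃ - 2 ρ₃²/(1 - ρ₃)`. -/
theorem landau_GkH0 (M : ℝ) (hM : 0 < M)
    (h g : ℂ → ℂ) (a b : ℕ → ℂ)
    (hhsum : ∀ z ∈ Metric.ball (0:ℂ) 1, HasSum (fun n : ℕ => a n * z ^ n) (h z))
    (hgsum : ∀ z ∈ Metric.ball (0:ℂ) 1, HasSum (fun n : ℕ => b n * z ^ n) (g z))
    (ha0 : a 0 = 0) (ha1 : a 1 = 1) (hb0 : b 0 = 0) (hb1 : b 1 = 0)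
    (hcoef : ∀ n : ℕ, 2 ≤ n → ‖a n‖ + ‖b n‖ ≤ 2)
    (hbound : ∀ z ∈ Metric.ball (0:ℂ) 1,
      ‖h z + starRingEnd ℂ (g z)‖ < M) :
    Set.InjOn (fun z => h z + starRingEnd ℂ (g z))
        (Metric.ball 0
          (1 - Real.sqrt (32 * M * (Real.pi + 8 * M)) / (2 * (Real.pi + 8 * M)))) ∧
      Metric.ball (0:ℂ)
          (Real.pi / (4 * M) *
              (1 - Real.sqrt (32 * M * (Real.pi + 8 * M)) / (2 * (Real.pi + 8 * M)))
            - 2 * (1 - Real.sqrt (32 * M * (Real.pi + 8 * M))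
                  / (2 * (Real.pi + 8 * M))) ^ 2
              / (1 - (1 - Real.sqrt (32 * M * (Real.pi + 8 * M))
                  / (2 * (Real.pi + 8 * M))))) ⊆
        (fun z => h z + starRingEnd ℂ (g z)) ''
          (Metric.ball 0
            (1 - Real.sqrt (32 * M * (Real.pi + 8 * M)) / (2 * (Real.pi + 8 * M)))) := by
  have hπ := Real.pi_pos
  -- switch from `Complex.abs` to norms
  have hcoef' : ∀ n : ℕ, 2 ≤ n → ‖a n‖ + ‖b n‖ ≤ 2 := by
    intro n hn
    simpa using hcoef n hn
  have hbound' : ∀ z ∈ Metric.ball (0:ℂ) 1, ‖h z + starRingEnd ℂ (g z)‖ < M := by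
    intro z hz
    simpa using hbound z hz
  have habound : ∀ n, ‖a n‖ ≤ 2 := by
    intro n
    match n with
    | 0 => simp [ha0]
    | 1 => simp [ha1]
    | (k+2) =>
      exact le_trans (le_add_of_nonneg_right (norm_nonneg _)) (hcoef' (k+2) (by omega))
  have hbbound : ∀ n, ‖b n‖ ≤ 2 := by
    intro n
    match n with
    | 0 => simp [hb0]
    | 1 => simp [hb1]
    | (k+2) =>
      exact le_trans (le_add_of_nonneg_left (norm_nonneg _)) (hcoef' (k+2) (by omega))
  have hM1 : 1 ≤ M := landau_M_ge_one M h g a b hhsum hgsum ha1 habound hbbound hbound'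
  -- the radius
  set s : ℝ := Real.sqrt (32 * M * (Real.pi + 8 * M)) / (2 * (Real.pi + 8 * M)) with hsdef
  have hden : 0 < Real.pi + 8 * M := by linarith
  have hs2 : s ^ 2 = 8 * M / (Real.pi + 8 * M) := by
    rw [hsdef, div_pow, Real.sq_sqrt (by positivity)]
    field_simp
    ring
  have hs0 : 0 < s := div_pos (Real.sqrt_pos.2 (by positivity)) (by positivity)
  have hs2lt : s ^ 2 < 1 := by
    rw [hs2, div_lt_one hden]; linarith
  have hs1 : s < 1 := by nlinarith
  set ρ : ℝ := 1 - s with hρdef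
  have hρ0 : 0 < ρ := by rw [hρdef]; linarith
  have hρ1 : ρ < 1 := by rw [hρdef]; linarith
  have hone_sub : (1:ℝ) - ρ = s := by rw [hρdef]; ring
  have hKρ : 2 * (1 / (1 - ρ) ^ 2 - 1) = Real.pi / (4 * M) := by
    rw [hone_sub, hs2]
    field_simp
    ring
  have hlam_lt : Real.pi / (4 * M) < 1 := by
    rw [div_lt_one (by linarith)]
    nlinarith [Real.pi_lt_d2]
  set f : ℂ → ℂ := fun z => h z + starRingEnd ℂ (g z) with hfdef
  -- strictly monotone bound function
  have hKmono : ∀ t : ℝ, 0 ≤ t → t < ρ → 2 * (1 / (1 - t) ^ 2 - 1) < Real.pi / (4 * M) := by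
    intro t ht0 htρ
    rw [← hKρ]
    have h1 : (0:ℝ) < 1 - ρ := by linarith
    have h2 : (1 - ρ) ^ 2 < (1 - t) ^ 2 := by nlinarith
    have h3 : 1 / (1 - t) ^ 2 < 1 / (1 - ρ) ^ 2 := by
      apply one_div_lt_one_div_of_lt
      · positivity
      · exact h2
    linarith
  -- Injectivity
  have hinj : Set.InjOn f (Metric.ball 0 ρ) := by
    intro z₁ hz₁ z₂ hz₂ heq
    by_contra hne
    rw [mem_ball_zero_iff] at hz₁ hz₂
    set ρm : ℝ := max ‖z₁‖ ‖z₂‖ with hρm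
    have hρm0 : 0 ≤ ρm := le_trans (norm_nonneg _) (le_max_left _ _)
    have hρmρ : ρm < ρ := max_lt hz₁ hz₂
    have hρm1 : ρm < 1 := lt_trans hρmρ hρ1
    have hz₁m : ‖z₁‖ ≤ ρm := le_max_left _ _
    have hz₂m : ‖z₂‖ ≤ ρm := le_max_right _ _
    have hz₁b : z₁ ∈ Metric.ball (0:ℂ) 1 := by rw [mem_ball_zero_iff]; linarith
    have hz₂b : z₂ ∈ Metric.ball (0:ℂ) 1 := by rw [mem_ball_zero_iff]; linarith
    set v : ℕ → ℂ := fun n => z₁ ^ n - z₂ ^ n with hv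
    have hSa : HasSum (fun n => a n * v n) (h z₁ - h z₂) := by
      have := (hhsum z₁ hz₁b).sub (hhsum z₂ hz₂b)
      simpa [hv, mul_sub] using this
    have hSb : HasSum (fun n => b n * v n) (g z₁ - g z₂) := by
      have := (hgsum z₁ hz₁b).sub (hgsum z₂ hz₂b)
      simpa [hv, mul_sub] using this
    set w : ℕ → ℝ := fun n => (((n:ℝ) + 2) * ρm ^ (n + 1)) * ‖z₁ - z₂‖ with hw
    have hwsum : HasSum w ((1 / (1 - ρm) ^ 2 - 1) * ‖z₁ - z₂‖) :=
      (landau_hasSum_A hρm0 hρm1).mul_right _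
    have hwnn : ∀ n, 0 ≤ w n := by
      intro n
      apply mul_nonneg (mul_nonneg (by positivity) (by positivity)) (norm_nonneg _)
    have hvb : ∀ n, ‖v (n + 2)‖ ≤ w n := by
      intro n
      have := landau_pow_sub_pow_norm_le z₁ z₂ hz₁m hz₂m (n + 2)
      calc ‖v (n + 2)‖ ≤ ((n + 2 : ℕ) : ℝ) * ρm ^ ((n + 2) - 1) * ‖z₁ - z₂‖ := this
        _ = w n := by rw [hw]; push_cast; ring_nf
    have htails := landau_two_tails hcoef' hSa hSb hwsum.summable hwnn hvb
      (by simp [hv]) (by simp [hv])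
    rw [hwsum.tsum_eq] at htails
    have hv1 : v 1 = z₁ - z₂ := by simp [hv]
    have ha1v : a 1 * v 1 = z₁ - z₂ := by rw [ha1, hv1, one_mul]
    have hb1v : b 1 * v 1 = 0 := by rw [hb1, zero_mul]
    rw [ha1v, hb1v, sub_zero] at htails
    -- f z₁ = f z₂
    have hfeq : h z₁ - h z₂ + starRingEnd ℂ (g z₁ - g z₂) = 0 := by
      have : f z₁ = f z₂ := heq
      rw [hfdef] at this
      simp only [map_sub]
      linear_combination this
    have hnorm_eq : ‖h z₁ - h z₂‖ = ‖g z₁ - g z₂‖ := by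
      have h1 : h z₁ - h z₂ = -(starRingEnd ℂ (g z₁ - g z₂)) := by
        linear_combination hfeq
      rw [h1, norm_neg, RCLike.norm_conj]
    have hzne : (0:ℝ) < ‖z₁ - z₂‖ := by
      rw [norm_pos_iff, sub_ne_zero]
      exact hne
    have hKlt := hKmono ρm hρm0 hρmρ
    have hfinal : ‖z₁ - z₂‖ ≤ (2 * (1 / (1 - ρm) ^ 2 - 1)) * ‖z₁ - z₂‖ := by
      calc ‖z₁ - z₂‖ = ‖(h z₁ - h z₂) - (z₁ - z₂) - (h z₁ - h z₂)‖ := by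
            rw [show (h z₁ - h z₂) - (z₁ - z₂) - (h z₁ - h z₂) = -(z₁ - z₂) by ring, norm_neg]
        _ ≤ ‖(h z₁ - h z₂) - (z₁ - z₂)‖ + ‖h z₁ - h z₂‖ := norm_sub_le _ _
        _ = ‖(h z₁ - h z₂) - (z₁ - z₂)‖ + ‖g z₁ - g z₂‖ := by rw [hnorm_eq]
        _ ≤ 2 * ((1 / (1 - ρm) ^ 2 - 1) * ‖z₁ - z₂‖) := htails
        _ = (2 * (1 / (1 - ρm) ^ 2 - 1)) * ‖z₁ - z₂‖ := by ring
    nlinarith [hKlt, hlam_lt, hzne, hfinal]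
  constructor
  · exact hinj
  · -- Covering part
    -- value at 0
    have hh0 : h 0 = 0 := by
      have h1 := hhsum 0 (by simp)
      have h2 : (fun n : ℕ => a n * (0:ℂ) ^ n) = fun _ => (0:ℂ) := by
        funext n
        match n with
        | 0 => simp [ha0]
        | (k+1) => simp
      rw [h2] at h1
      exact h1.unique hasSum_zero
    have hg0' : g 0 = 0 := by
      have h1 := hgsum 0 (by simp)
      have h2 : (fun n : ℕ => b n * (0:ℂ) ^ n) = fun _ => (0:ℂ) := by
        funext n
        match n with
        | 0 => simp [hb0]
        | (k+1) => simp
      rw [h2] at h1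
      exact h1.unique hasSum_zero
    have hf0 : f 0 = 0 := by
      show h 0 + starRingEnd ℂ (g 0) = 0
      rw [hh0, hg0']
      simp
    set R : ℝ := Real.pi / (4 * M) * ρ - 2 * ρ ^ 2 / (1 - ρ) with hRdef
    -- derivative functions
    set Dh : ℂ → ℂ := fun z => ∑' n : ℕ, a n * (n * z ^ (n - 1)) with hDhdef
    set Dg : ℂ → ℂ := fun z => ∑' n : ℕ, b n * (n * z ^ (n - 1)) with hDgdef
    have hDerh : ∀ z ∈ Metric.ball (0:ℂ) 1,
        HasSum (fun n : ℕ => a n * (n * z ^ (n - 1))) (Dh z) ∧ HasDerivAt h (Dh z) z :=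
      fun z hz => landau_power_series_hasDerivAt habound hhsum hz
    have hDerg : ∀ z ∈ Metric.ball (0:ℂ) 1,
        HasSum (fun n : ℕ => b n * (n * z ^ (n - 1))) (Dg z) ∧ HasDerivAt g (Dg z) z :=
      fun z hz => landau_power_series_hasDerivAt hbbound hgsum hz
    -- derivative tail bound
    have hDbound : ∀ z : ℂ, ‖z‖ < ρ → ‖Dh z - 1‖ + ‖Dg z‖ < Real.pi / (4 * M) := by
      intro z hzρ
      have hz1 : z ∈ Metric.ball (0:ℂ) 1 := mem_ball_zero_iff.2 (hzρ.trans hρ1)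
      have ht0 : (0:ℝ) ≤ ‖z‖ := norm_nonneg z
      have ht1 : ‖z‖ < 1 := hzρ.trans hρ1
      set v : ℕ → ℂ := fun n => (n : ℂ) * z ^ (n - 1) with hvdef
      have hSa : HasSum (fun n => a n * v n) (Dh z) := (hDerh z hz1).1
      have hSb : HasSum (fun n => b n * v n) (Dg z) := (hDerg z hz1).1
      have hwsum := landau_hasSum_A ht0 ht1
      have hwnn : ∀ n : ℕ, 0 ≤ ((n:ℝ) + 2) * ‖z‖ ^ (n + 1) := by
        intro n; positivity
      have hvb : ∀ n : ℕ, ‖v (n + 2)‖ ≤ ((n:ℝ) + 2) * ‖z‖ ^ (n + 1) := by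
        intro n
        rw [hvdef]
        simp only []
        rw [norm_mul, norm_pow, Complex.norm_natCast]
        rw [show (n + 2) - 1 = n + 1 by omega]
        push_cast
        exact le_refl _
      have htails := landau_two_tails hcoef' hSa hSb hwsum.summable hwnn hvb
        (by simp [hvdef]) (by simp [hvdef])
      rw [hwsum.tsum_eq] at htails
      have ha1v : a 1 * v 1 = 1 := by
        rw [hvdef]; simp [ha1]
      have hb1v : b 1 * v 1 = 0 := by
        rw [hvdef]; simp [hb1]
      rw [ha1v, hb1v, sub_zero] at htails
      have := hKmono ‖z‖ ht0 hzρ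
      linarith
    -- local openness via inverse function theorem
    have hnhds : ∀ z : ℂ, ‖z‖ < ρ → Filter.map f (nhds z) = nhds (f z) := by
      intro z hzρ
      have hz1 : z ∈ Metric.ball (0:ℂ) 1 := mem_ball_zero_iff.2 (hzρ.trans hρ1)
      have hDh' : HasDerivAt h (Dh z) z := (hDerh z hz1).2
      have hDg' : HasDerivAt g (Dg z) z := (hDerg z hz1).2
      set L : ℂ →L[ℝ] ℂ :=
        (ContinuousLinearMap.smulRight (1 : ℂ →L[ℂ] ℂ) (Dh z)).restrictScalars ℝ +
          (Complex.conjCLE : ℂ →L[ℝ] ℂ).comp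
            ((ContinuousLinearMap.smulRight (1 : ℂ →L[ℂ] ℂ) (Dg z)).restrictScalars ℝ) with hLdef
      have hfd : HasFDerivAt f L z := by
        have h1 : HasFDerivAt h
            ((ContinuousLinearMap.smulRight (1 : ℂ →L[ℂ] ℂ) (Dh z)).restrictScalars ℝ) z :=
          (hDh'.hasFDerivAt).restrictScalars ℝ
        have h2 : HasFDerivAt g
            ((ContinuousLinearMap.smulRight (1 : ℂ →L[ℂ] ℂ) (Dg z)).restrictScalars ℝ) z :=
          (hDg'.hasFDerivAt).restrictScalars ℝ
        have h3 : HasFDerivAt (fun w => starRingEnd ℂ (g w))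
            ((Complex.conjCLE : ℂ →L[ℝ] ℂ).comp
              ((ContinuousLinearMap.smulRight (1 : ℂ →L[ℂ] ℂ) (Dg z)).restrictScalars ℝ)) z :=
          ((Complex.conjCLE : ℂ →L[ℝ] ℂ).hasFDerivAt).comp z h2
        exact h1.add h3
      have hLapp : ∀ v : ℂ, L v = v * Dh z + starRingEnd ℂ (v * Dg z) := by
        intro v
        rw [hLdef]
        simp [ContinuousLinearMap.smulRight_apply, smul_eq_mul]
      have hbd := hDbound z hzρ
      have hDhge : 1 - ‖Dh z - 1‖ ≤ ‖Dh z‖ := by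
        have h1 := norm_sub_norm_le (Dh z) (1:ℂ)
        have h2 : ‖(1:ℂ)‖ = 1 := by simp
        linarith [abs_norm_sub_norm_le (Dh z) (1:ℂ), abs_le.mp (abs_norm_sub_norm_le (Dh z) (1:ℂ))]
      have hDhpos : ‖Dg z‖ < ‖Dh z‖ := by
        have := hlam_lt
        linarith
      have hker : ∀ v : ℂ, L v = 0 → v = 0 := by
        intro v hv0
        by_contra hvne
        have hnv : 0 < ‖v‖ := norm_pos_iff.2 hvne
        have heq2 : v * Dh z = -(starRingEnd ℂ (v * Dg z)) := by
          rw [hLapp] at hv0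
          linear_combination hv0
        have hnorm := congrArg norm heq2
        rw [norm_mul, norm_neg, RCLike.norm_conj, norm_mul] at hnorm
        have : ‖Dh z‖ = ‖Dg z‖ := mul_left_cancel₀ (ne_of_gt hnv) hnorm
        linarith
      have hinjL : Function.Injective L := by
        intro x y hxy
        have := hker (x - y) (by rw [map_sub, hxy, sub_self])
        exact sub_eq_zero.mp this
      have hsurjL : LinearMap.range (L : ℂ →ₗ[ℝ] ℂ) = ⊤ := by
        rw [LinearMap.range_eq_top]
        exact (LinearMap.injective_iff_surjective
          (f := (L : ℂ →ₗ[ℝ] ℂ))).mp hinjL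
      have hdiffh : DifferentiableOn ℂ h (Metric.ball 0 1) := fun w hw =>
        ((hDerh w hw).2.differentiableAt.differentiableWithinAt)
      have hdiffg : DifferentiableOn ℂ g (Metric.ball 0 1) := fun w hw =>
        ((hDerg w hw).2.differentiableAt.differentiableWithinAt)
      have hah : AnalyticAt ℂ h z := hdiffh.analyticAt (Metric.isOpen_ball.mem_nhds hz1)
      have hag : AnalyticAt ℂ g z := hdiffg.analyticAt (Metric.isOpen_ball.mem_nhds hz1)
      have hcd : ContDiffAt ℝ 1 f z := by
        have h1 : ContDiffAt ℝ 1 h z := (hah.contDiffAt).restrict_scalars ℝ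
        have h2 : ContDiffAt ℝ 1 g z := (hag.contDiffAt).restrict_scalars ℝ
        have h3 : ContDiffAt ℝ 1 (fun w => starRingEnd ℂ (g w)) z :=
          ((Complex.conjCLE : ℂ →L[ℝ] ℂ).contDiff.contDiffAt).comp z h2
        exact h1.add h3
      have hstrict : HasStrictFDerivAt f L z := by
        have hs := hcd.hasStrictFDerivAt one_ne_zero
        rwa [hfd.fderiv] at hs
      exact hstrict.map_nhds_eq_of_surj hsurjL
    -- image of the open ball is open
    have hUopen : IsOpen (f '' Metric.ball 0 ρ) := by
      rw [isOpen_iff_mem_nhds]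
      rintro x ⟨z, hz, rfl⟩
      rw [← hnhds z (mem_ball_zero_iff.1 hz)]
      exact Filter.image_mem_map (Metric.isOpen_ball.mem_nhds hz)
    -- continuity on the closed ball, compact image
    have hfc : ContinuousOn f (Metric.closedBall 0 ρ) := by
      intro z hz
      have hz1 : z ∈ Metric.ball (0:ℂ) 1 :=
        mem_ball_zero_iff.2 (lt_of_le_of_lt (mem_closedBall_zero_iff.1 hz) hρ1)
      apply ContinuousAt.continuousWithinAt
      have hch : ContinuousAt h z := (hDerh z hz1).2.differentiableAt.continuousAt
      have hcg : ContinuousAt g z := (hDerg z hz1).2.differentiableAt.continuousAt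
      exact hch.add (ContinuousAt.comp continuous_star.continuousAt hcg)
    have hCcomp : IsCompact (f '' Metric.closedBall 0 ρ) :=
      (isCompact_closedBall _ _).image_of_continuousOn hfc
    -- boundary lower bound
    have hbdry : ∀ z : ℂ, ‖z‖ = ρ → R ≤ ‖f z‖ := by
      intro z hzρ
      have hz1 : z ∈ Metric.ball (0:ℂ) 1 := mem_ball_zero_iff.2 (by rw [hzρ]; exact hρ1)
      set v : ℕ → ℂ := fun n => z ^ n with hvdef
      have hSa : HasSum (fun n => a n * v n) (h z) := hhsum z hz1
      have hSb : HasSum (fun n => b n * v n) (g z) := hgsum z hz1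
      have hwsum := landau_hasSum_B hρ0.le hρ1
      have hwnn : ∀ n : ℕ, 0 ≤ ρ ^ (n + 2) := by intro n; positivity
      have hvb : ∀ n : ℕ, ‖v (n + 2)‖ ≤ ρ ^ (n + 2) := by
        intro n
        rw [hvdef]
        simp only []
        rw [norm_pow, hzρ]
      have htails := landau_two_tails hcoef' hSa hSb hwsum.summable hwnn hvb
        (by simp [hvdef, ha0]) (by simp [hvdef, hb0])
      rw [hwsum.tsum_eq] at htails
      have ha1v : a 1 * v 1 = z := by rw [hvdef]; simp [ha1]
      have hb1v : b 1 * v 1 = 0 := by rw [hb1, zero_mul]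
      rw [ha1v, hb1v, sub_zero] at htails
      -- ‖f z‖ ≥ ‖z‖ - tails
      have hlow : ρ - 2 * (ρ ^ 2 * (1 - ρ)⁻¹) ≤ ‖f z‖ := by
        have hzz : z = f z - (h z - z) - starRingEnd ℂ (g z) := by
          show z = (h z + starRingEnd ℂ (g z)) - (h z - z) - starRingEnd ℂ (g z)
          ring
        have h1 : ‖z‖ ≤ ‖f z‖ + ‖h z - z‖ + ‖g z‖ := by
          calc ‖z‖ = ‖f z - (h z - z) - starRingEnd ℂ (g z)‖ := by rw [← hzz]
            _ ≤ ‖f z - (h z - z)‖ + ‖starRingEnd ℂ (g z)‖ := norm_sub_le _ _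
            _ ≤ ‖f z‖ + ‖h z - z‖ + ‖starRingEnd ℂ (g z)‖ := by
                have := norm_sub_le (f z) (h z - z)
                linarith
            _ = ‖f z‖ + ‖h z - z‖ + ‖g z‖ := by rw [RCLike.norm_conj]
        rw [hzρ] at h1
        linarith
      have hlam_le : Real.pi / (4 * M) ≤ 1 := hlam_lt.le
      have hρnn : 0 ≤ ρ := hρ0.le
      have hfr : ρ ^ 2 * (1 - ρ)⁻¹ = ρ ^ 2 / (1 - ρ) := by rw [div_eq_mul_inv]
      rw [hfr] at hlow
      have hstep : Real.pi / (4 * M) * ρ ≤ ρ := by nlinarith [hlam_le, hρnn]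
      have hdiv : 2 * (ρ ^ 2 / (1 - ρ)) = 2 * ρ ^ 2 / (1 - ρ) := by ring
      rw [hRdef]
      linarith [hlow, hstep, hdiv]
    -- the preconnectedness argument
    intro w hw
    rw [mem_ball_zero_iff] at hw
    have hR0 : 0 < R := lt_of_le_of_lt (norm_nonneg w) hw
    have h0U : (0:ℂ) ∈ f '' Metric.ball 0 ρ :=
      ⟨0, mem_ball_zero_iff.2 (by simpa using hρ0), hf0⟩
    by_contra hwU
    have hpre : IsPreconnected (Metric.ball (0:ℂ) R) := (convex_ball _ _).isPreconnected
    have hCclosed : IsClosed (f '' Metric.closedBall 0 ρ) := hCcomp.isClosed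
    have huC : f '' Metric.ball 0 ρ ⊆ f '' Metric.closedBall 0 ρ :=
      Set.image_mono Metric.ball_subset_closedBall
    have hCRu : f '' Metric.closedBall 0 ρ ∩ Metric.ball 0 R ⊆ f '' Metric.ball 0 ρ := by
      rintro x ⟨⟨z, hz, rfl⟩, hxR⟩
      rw [mem_closedBall_zero_iff] at hz
      rcases lt_or_eq_of_le hz with h' | h'
      · exact ⟨z, mem_ball_zero_iff.2 h', rfl⟩
      · exfalso
        have := hbdry z h'
        rw [mem_ball_zero_iff] at hxR
        linarith
    have hcover : Metric.ball (0:ℂ) R ⊆ f '' Metric.ball 0 ρ ∪ (f '' Metric.closedBall 0 ρ)ᶜ := by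
      intro x hx
      by_cases hxC : x ∈ f '' Metric.closedBall 0 ρ
      · exact Or.inl (hCRu ⟨hxC, hx⟩)
      · exact Or.inr hxC
    have h1ne : (Metric.ball (0:ℂ) R ∩ f '' Metric.ball 0 ρ).Nonempty :=
      ⟨0, mem_ball_zero_iff.2 (by simpa using hR0), h0U⟩
    have h2ne : (Metric.ball (0:ℂ) R ∩ (f '' Metric.closedBall 0 ρ)ᶜ).Nonempty := by
      refine ⟨w, mem_ball_zero_iff.2 hw, ?_⟩
      intro hwC
      exact hwU (hCRu ⟨hwC, mem_ball_zero_iff.2 hw⟩)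
    obtain ⟨x, hxball, hxu, hxc⟩ := hpre (f '' Metric.ball 0 ρ)
      ((f '' Metric.closedBall 0 ρ)ᶜ) hUopen hCclosed.isOpen_compl hcover h1ne h2ne
    exact hxc (huC hxu)
end

section
/- Let M > 0 and let f = h + conj(g), with h and g analytic on the unit disc D, be a harmonic mapping such that f(0) = 0, |f(z)| < M for all z ∈ D, and J_f(0) = |h'(0)|² − |g'(0)|² = 1. Then λ_f(0) = | |h'(0)| − |g'(0)| | ≥ π/(4M). -/
open Complex Metric

lemma strip_schwarz {M : ℝ} (hM : 0 < M) {φ : ℂ → ℂ}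
    (hφ : DifferentiableOn ℂ φ (Metric.ball 0 1)) (hφ0 : φ 0 = 0)
    (hre : ∀ z ∈ Metric.ball (0:ℂ) 1, |(φ z).re| < M) :
    Real.pi * ‖deriv φ 0‖ ≤ 4 * M := by
  set r : ℝ := Real.pi / (2*M) with hr
  have hrpos : 0 < r := by positivity
  have hrM : r * M = Real.pi / 2 := by rw [hr]; field_simp
  set c : ℂ := (r : ℂ) * I with hc
  have hres : ∀ z ∈ Metric.ball (0:ℂ) 1, 0 < (Complex.exp (c * φ z)).re := by
    intro z hz
    rw [Complex.exp_re]
    have him : (c * φ z).im = r * (φ z).re := by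
      simp [hc, Complex.mul_im, Complex.mul_re]
    have hlt : |(c * φ z).im| < Real.pi / 2 := by
      rw [him, abs_mul, abs_of_pos hrpos, ← hrM]
      exact mul_lt_mul_of_pos_left (hre z hz) hrpos
    have hlt' := abs_lt.1 hlt
    exact mul_pos (Real.exp_pos _) (Real.cos_pos_of_mem_Ioo ⟨hlt'.1, hlt'.2⟩)
  have hden : ∀ z ∈ Metric.ball (0:ℂ) 1, Complex.exp (c * φ z) + 1 ≠ 0 := by
    intro z hz h0
    have h1 : Complex.exp (c * φ z) = -1 := by linear_combination h0
    have h2 := hres z hz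
    rw [h1] at h2
    norm_num at h2
  set F : ℂ → ℂ := fun z => (Complex.exp (c * φ z) - 1) / (Complex.exp (c * φ z) + 1) with hF
  have hFd : DifferentiableOn ℂ F (Metric.ball 0 1) :=
    DifferentiableOn.div (((hφ.const_mul c).cexp).sub_const 1)
      (((hφ.const_mul c).cexp).add_const 1) hden
  have hF0 : F 0 = 0 := by simp [hF, hφ0]
  have hmaps : Set.MapsTo F (Metric.ball 0 1) (Metric.ball (F 0) 1) := by
    intro z hz
    rw [hF0, mem_ball_zero_iff]
    have hs := hres z hz
    have h2 : Complex.normSq (Complex.exp (c * φ z) + 1)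
        - Complex.normSq (Complex.exp (c * φ z) - 1) = 4 * (Complex.exp (c * φ z)).re := by
      simp [Complex.normSq_apply]; ring
    have habs : ‖Complex.exp (c * φ z) - 1‖
        < ‖Complex.exp (c * φ z) + 1‖ := by
      nlinarith [Complex.sq_norm (Complex.exp (c * φ z) - 1),
        Complex.sq_norm (Complex.exp (c * φ z) + 1),
        norm_nonneg (Complex.exp (c * φ z) - 1),
        norm_nonneg (Complex.exp (c * φ z) + 1)]
    show ‖F z‖ < 1
    rw [hF, norm_div, div_lt_one (norm_pos_iff.mpr (hden z hz))]
    exact habs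
  have hmem : (0:ℂ) ∈ Metric.ball (0:ℂ) 1 := by simp
  have hφat : HasDerivAt φ (deriv φ 0) 0 :=
    (hφ.differentiableAt (isOpen_ball.mem_nhds hmem)).hasDerivAt
  set d := deriv φ 0 with hd
  have h1 : HasDerivAt (fun z => c * φ z) (c * d) 0 := hφat.const_mul c
  have h2 : HasDerivAt (fun z => Complex.exp (c * φ z)) (c * d) 0 := by
    simpa [hφ0] using h1.cexp
  have hFder : HasDerivAt F (c * d / 2) 0 := by
    have := (h2.sub_const 1).div (h2.add_const 1) (by simp [hφ0])
    exact this.congr_deriv (by simp [hφ0]; ring)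
  have hschwarz := Complex.norm_deriv_le_div_of_mapsTo_ball hFd (hmaps.mono_right ball_subset_closedBall) one_pos
  rw [hFder.deriv] at hschwarz
  have habs2 : ‖c * d / 2‖ = r * ‖d‖ / 2 := by
    rw [norm_div, norm_mul, hc, norm_mul, Complex.norm_I, Complex.norm_real, Real.norm_eq_abs,
      abs_of_pos hrpos]
    norm_num
  rw [habs2] at hschwarz
  norm_num at hschwarz
  -- hschwarz : r * |d| / 2 ≤ 1
  have hd0 := norm_nonneg d
  nlinarith [mul_le_mul_of_nonneg_left hschwarz (le_of_lt hM), hrM, Real.pi_pos]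

/-- Consequence of the harmonic Schwarz lemma: if `f = h + conj g` is harmonic
on the unit disc with `f(0) = 0`, `|f| < M` and `J_f(0) = |h'(0)|² - |g'(0)|² = 1`,
then `λ_f(0) = ||h'(0)| - |g'(0)|| ≥ π/(4M)`. -/
theorem lambda_lower_bound (M : ℝ) (hM : 0 < M) (h g : ℂ → ℂ)
    (hh : DifferentiableOn ℂ h (Metric.ball 0 1))
    (hg : DifferentiableOn ℂ g (Metric.ball 0 1))
    (hf0 : h 0 + starRingEnd ℂ (g 0) = 0)
    (hbound : ∀ z ∈ Metric.ball (0:ℂ) 1,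
      ‖h z + starRingEnd ℂ (g z)‖ < M)
    (hJ : ‖deriv h 0‖ ^ 2 - ‖deriv g 0‖ ^ 2 = 1) :
    Real.pi / (4 * M) ≤ |‖deriv h 0‖ - ‖deriv g 0‖| := by
  set a := deriv h 0 with ha
  set b := deriv g 0 with hb
  set w := a * (starRingEnd ℂ) b with hw
  obtain ⟨θ, hθ⟩ : ∃ θ : ℝ, ((‖w‖ : ℝ) : ℂ) * Complex.exp ((θ : ℂ) * I) = w :=
    ⟨w.arg, Complex.norm_mul_exp_arg_mul_I w⟩
  set e : ℂ := Complex.exp (((-θ / 2 : ℝ) : ℂ) * I) with he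
  have habse : ‖e‖ = 1 := by
    rw [he, Complex.norm_exp]; simp
  have he2 : e ^ 2 = Complex.exp (((-θ : ℝ) : ℂ) * I) := by
    rw [he, sq, ← Complex.exp_add]
    congr 1
    push_cast
    ring
  have hew : e ^ 2 * w = ((‖w‖ : ℝ) : ℂ) := by
    rw [he2, ← hθ, mul_left_comm, ← Complex.exp_add]
    have h0 : ((-θ : ℝ) : ℂ) * I + (θ : ℝ) * I = 0 := by push_cast; ring
    rw [h0, Complex.exp_zero, mul_one, hθ]
  have hnormd : ‖e * a + (starRingEnd ℂ) e * b‖ ^ 2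
      = (‖a‖ + ‖b‖) ^ 2 := by
    rw [Complex.sq_norm, Complex.normSq_add]
    have h3 : (e * a) * (starRingEnd ℂ) ((starRingEnd ℂ) e * b) = e ^ 2 * w := by
      rw [map_mul, Complex.conj_conj, hw]; ring
    rw [h3, hew]
    simp only [Complex.ofReal_re, hw, Complex.normSq_mul, Complex.normSq_conj,
      Complex.normSq_eq_norm_sq, norm_mul, Complex.norm_conj, habse]
    ring
  -- the rotated analytic function
  set φ : ℂ → ℂ := fun z =>
    e * h z + (starRingEnd ℂ) e * g z - (e * h 0 + (starRingEnd ℂ) e * g 0) with hφ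
  have hφd : DifferentiableOn ℂ φ (Metric.ball 0 1) :=
    ((hh.const_mul e).add (hg.const_mul _)).sub_const _
  have hφ0 : φ 0 = 0 := by simp [hφ]
  have hkey : ∀ u v : ℂ, (e * u + (starRingEnd ℂ) e * v).re
      = (e * (u + (starRingEnd ℂ) v)).re := by
    intro u v
    simp [Complex.add_re, Complex.mul_re, Complex.add_im]
    ring
  have hre : ∀ z ∈ Metric.ball (0:ℂ) 1, |(φ z).re| < M := by
    intro z hz
    have h4 : (φ z).re = (e * (h z + (starRingEnd ℂ) (g z))).re := by
      rw [hφ]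
      simp only [Complex.sub_re]
      rw [hkey, hkey, hf0, mul_zero, Complex.zero_re, sub_zero]
    calc |(φ z).re| = |(e * (h z + (starRingEnd ℂ) (g z))).re| := by rw [h4]
      _ ≤ ‖e * (h z + (starRingEnd ℂ) (g z))‖ := Complex.abs_re_le_norm _
      _ = ‖h z + (starRingEnd ℂ) (g z)‖ := by rw [norm_mul, habse, one_mul]
      _ < M := hbound z hz
  have hmem : (0:ℂ) ∈ Metric.ball (0:ℂ) 1 := by simp
  have hha : HasDerivAt h a 0 := (hh.differentiableAt (isOpen_ball.mem_nhds hmem)).hasDerivAt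
  have hgb : HasDerivAt g b 0 := (hg.differentiableAt (isOpen_ball.mem_nhds hmem)).hasDerivAt
  have hφder : HasDerivAt φ (e * a + (starRingEnd ℂ) e * b) 0 :=
    ((hha.const_mul e).add (hgb.const_mul _)).sub_const _
  have hstrip := strip_schwarz hM hφd hφ0 hre
  rw [hφder.deriv] at hstrip
  have hD : ‖a‖ + ‖b‖ ≤ ‖e * a + (starRingEnd ℂ) e * b‖ := by
    nlinarith [hnormd, norm_nonneg (e * a + (starRingEnd ℂ) e * b),
      norm_nonneg a, norm_nonneg b]
  have hπ : Real.pi * (‖a‖ + ‖b‖) ≤ 4 * M :=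
    le_trans (mul_le_mul_of_nonneg_left hD Real.pi_pos.le) hstrip
  have hx : 0 < ‖a‖ - ‖b‖ := by
    nlinarith [norm_nonneg a, norm_nonneg b]
  have hprod : (‖a‖ - ‖b‖) * (‖a‖ + ‖b‖) = 1 := by
    linear_combination hJ
  rw [abs_of_pos hx, div_le_iff₀ (by positivity : (0:ℝ) < 4 * M)]
  have h6 := mul_le_mul_of_nonneg_left hπ hx.le
  have h7 : (‖a‖ - ‖b‖) * (Real.pi * (‖a‖ + ‖b‖))
      = Real.pi := by linear_combination Real.pi * hprod
  linarith
end

section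
/- Let M > 0, α ≥ 0, and let ρ₃ be the unique zero in (0, 1) of J(r) = π/(4M) − ∑_{n=2}^∞ 2n·r^{n−1}/(1 + (n − 1)α). Define F₃ on the unit disc D by F₃(z) = (π/(4M))·z − ∑_{n=2}^∞ 2·zⁿ/(1 + (n − 1)α). Then for every r with ρ₃ < r ≤ 1 there exist z₁ ≠ z₂ in D_r with F₃(z₁) = F₃(z₂); that is, F₃ is not injective on D_r for any r ∈ (ρ₃, 1]. Hence the univalence radius ρ₃ in the Landau-type theorem for the class G_{k,H}(α, 1) is sharp. -/
open Real Filter Set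

private lemma pow_diff_le' (m : ℕ) {x y b : ℝ} (hx : 0 ≤ x) (hxy : x ≤ y) (hyb : y ≤ b) :
    y ^ (m + 1) - x ^ (m + 1) ≤ ((m : ℝ) + 1) * b ^ m * (y - x) := by
  induction m with
  | zero => simp
  | succ m ih =>
    have hy : 0 ≤ y := hx.trans hxy
    have hb : 0 ≤ b := hy.trans hyb
    have h1 : x ^ (m + 1) ≤ y ^ (m + 1) := pow_le_pow_left₀ hx hxy _
    have h2 : y ^ (m + 1) ≤ b ^ (m + 1) := pow_le_pow_left₀ hy hyb _
    have h3 : (0:ℝ) ≤ y - x := by linarith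
    push_cast
    calc y ^ (m + 2) - x ^ (m + 2)
        = y * (y ^ (m + 1) - x ^ (m + 1)) + (y - x) * x ^ (m + 1) := by ring
      _ ≤ b * (((m : ℝ) + 1) * b ^ m * (y - x)) + (y - x) * b ^ (m + 1) :=
          add_le_add (mul_le_mul hyb ih (by linarith) hb)
            (mul_le_mul_of_nonneg_left (h1.trans h2) h3)
      _ = ((m : ℝ) + 1 + 1) * b ^ (m + 1) * (y - x) := by ring

private lemma pow_diff_ge' (m : ℕ) {a x y : ℝ} (ha : 0 ≤ a) (hax : a ≤ x) (hxy : x ≤ y) :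
    ((m : ℝ) + 1) * a ^ m * (y - x) ≤ y ^ (m + 1) - x ^ (m + 1) := by
  induction m with
  | zero => simp
  | succ m ih =>
    have hx : 0 ≤ x := ha.trans hax
    have hy : 0 ≤ y := hx.trans hxy
    have h1 : a ^ (m + 1) ≤ x ^ (m + 1) := pow_le_pow_left₀ ha hax _
    have h3 : (0:ℝ) ≤ y - x := by linarith
    have h4 : (0:ℝ) ≤ ((m : ℝ) + 1) * a ^ m * (y - x) := by
      have := pow_nonneg ha m
      positivity
    push_cast
    calc ((m : ℝ) + 1 + 1) * a ^ (m + 1) * (y - x)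
        = a * (((m : ℝ) + 1) * a ^ m * (y - x)) + (y - x) * a ^ (m + 1) := by ring
      _ ≤ y * (y ^ (m + 1) - x ^ (m + 1)) + (y - x) * x ^ (m + 1) :=
          add_le_add (mul_le_mul (hax.trans hxy) ih h4 hy)
            (mul_le_mul_of_nonneg_left h1 h3)
      _ = y ^ (m + 2) - x ^ (m + 2) := by ring

private lemma summable_aux1 {c : ℕ → ℝ} (hc : ∀ n, 1 ≤ c n) {t : ℝ} (h0 : 0 ≤ t) (h1 : t < 1) :
    Summable (fun n : ℕ => 2 * t ^ (n + 2) / c n) := by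
  refine Summable.of_nonneg_of_le (fun n => by have := hc n; positivity) (fun n => ?_)
    ((summable_geometric_of_lt_one h0 h1).mul_left 2)
  have hcn := hc n
  have ht2 : t ^ (n + 2) ≤ t ^ n := pow_le_pow_of_le_one h0 h1.le (by omega)
  calc 2 * t ^ (n + 2) / c n ≤ 2 * t ^ (n + 2) := div_le_self (by positivity) hcn
    _ ≤ 2 * t ^ n := by linarith

private lemma summable_aux2 {c : ℕ → ℝ} (hc : ∀ n, 1 ≤ c n) {t : ℝ} (h0 : 0 ≤ t) (h1 : t < 1) :
    Summable (fun n : ℕ => 2 * ((n : ℝ) + 2) * t ^ (n + 1) / c n) := by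
  have hs : Summable (fun n : ℕ => 2 * t * ((n : ℝ) ^ 1 * t ^ n) + 4 * t * t ^ n) := by
    apply Summable.add
    · exact (summable_pow_mul_geometric_of_norm_lt_one (R := ℝ) 1
        (by rwa [Real.norm_eq_abs, abs_of_nonneg h0])).mul_left _
    · exact (summable_geometric_of_lt_one h0 h1).mul_left _
  refine Summable.of_nonneg_of_le (fun n => by have := hc n; positivity) (fun n => ?_) hs
  have hcn := hc n
  calc 2 * ((n : ℝ) + 2) * t ^ (n + 1) / c n
      ≤ 2 * ((n : ℝ) + 2) * t ^ (n + 1) := div_le_self (by positivity) hcn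
    _ = 2 * t * ((n : ℝ) ^ 1 * t ^ n) + 4 * t * t ^ n := by ring

/-- strict increase on `[0, ρ]`. -/
private lemma incr_aux {c : ℕ → ℝ} (hc : ∀ n, 1 ≤ c n) {P ρ x y : ℝ}
    (hρ0 : 0 < ρ) (hρ1 : ρ < 1)
    (hP : P = ∑' n : ℕ, 2 * ((n : ℝ) + 2) * ρ ^ (n + 1) / c n)
    (hx : 0 ≤ x) (hxy : x < y) (hyρ : y ≤ ρ) :
    P * x - ∑' n : ℕ, 2 * x ^ (n + 2) / c n < P * y - ∑' n : ℕ, 2 * y ^ (n + 2) / c n := by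
  have hy1 : y < 1 := lt_of_le_of_lt hyρ hρ1
  have hx1 : x < 1 := hxy.trans hy1
  have hy0 : 0 ≤ y := hx.trans hxy.le
  have hsx := summable_aux1 hc hx hx1
  have hsy := summable_aux1 hc hy0 hy1
  have hsD := summable_aux2 hc hρ0.le hρ1
  have key : ∑' n : ℕ, (2 * y ^ (n + 2) / c n - 2 * x ^ (n + 2) / c n)
      < ∑' n : ℕ, (y - x) * (2 * ((n : ℝ) + 2) * ρ ^ (n + 1) / c n) := by
    apply Summable.tsum_lt_tsum (i := 0) _ _ (hsy.sub hsx) (hsD.mul_left (y - x))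
    · intro n
      dsimp only
      have hcn := hc n
      have hcn0 : (0:ℝ) < c n := by linarith
      have h5 := pow_diff_le' (n + 1) hx hxy.le hyρ
      push_cast at h5
      have e1 : 2 * y ^ (n + 2) / c n - 2 * x ^ (n + 2) / c n
          = (2 * (y ^ (n + 2) - x ^ (n + 2))) / c n := by ring
      have e2 : (y - x) * (2 * ((n : ℝ) + 2) * ρ ^ (n + 1) / c n)
          = ((y - x) * (2 * ((n : ℝ) + 2) * ρ ^ (n + 1))) / c n := by ring
      have hpow : x ^ (n + 2) ≤ y ^ (n + 2) := pow_le_pow_left₀ hx hxy.le _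
      rw [e1, e2, div_le_div_iff_of_pos_right hcn0]
      nlinarith [h5, hpow]
    · have hc0 := hc 0
      have hcn0 : (0:ℝ) < c 0 := by linarith
      have e1 : 2 * y ^ (0 + 2) / c 0 - 2 * x ^ (0 + 2) / c 0
          = (2 * (y ^ 2 - x ^ 2)) / c 0 := by norm_num; ring
      have e2 : (y - x) * (2 * (((0:ℕ) : ℝ) + 2) * ρ ^ (0 + 1) / c 0)
          = ((y - x) * (4 * ρ)) / c 0 := by norm_num; ring
      rw [e1, e2, div_lt_div_iff_of_pos_right hcn0]
      nlinarith [hxy, hyρ]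
  have hsub := Summable.tsum_sub hsy hsx
  have hml : ∑' n : ℕ, (y - x) * (2 * ((n : ℝ) + 2) * ρ ^ (n + 1) / c n)
      = (y - x) * ∑' n : ℕ, 2 * ((n : ℝ) + 2) * ρ ^ (n + 1) / c n := tsum_mul_left
  rw [hml, ← hP, hsub] at key
  nlinarith [key]

/-- strict decrease on `[ρ, 1)`. -/
private lemma decr_aux {c : ℕ → ℝ} (hc : ∀ n, 1 ≤ c n) {P ρ x y : ℝ}
    (hρ0 : 0 < ρ) (hρ1 : ρ < 1)
    (hP : P = ∑' n : ℕ, 2 * ((n : ℝ) + 2) * ρ ^ (n + 1) / c n)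
    (hρx : ρ ≤ x) (hxy : x < y) (hy1 : y < 1) :
    P * y - ∑' n : ℕ, 2 * y ^ (n + 2) / c n < P * x - ∑' n : ℕ, 2 * x ^ (n + 2) / c n := by
  have hx0 : 0 ≤ x := hρ0.le.trans hρx
  have hx1 : x < 1 := hxy.trans hy1
  have hy0 : 0 ≤ y := hx0.trans hxy.le
  have hsx := summable_aux1 hc hx0 hx1
  have hsy := summable_aux1 hc hy0 hy1
  have hsD := summable_aux2 hc hρ0.le hρ1
  have key : ∑' n : ℕ, (y - x) * (2 * ((n : ℝ) + 2) * ρ ^ (n + 1) / c n)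
      < ∑' n : ℕ, (2 * y ^ (n + 2) / c n - 2 * x ^ (n + 2) / c n) := by
    apply Summable.tsum_lt_tsum (i := 0) _ _ (hsD.mul_left (y - x)) (hsy.sub hsx)
    · intro n
      dsimp only
      have hcn := hc n
      have hcn0 : (0:ℝ) < c n := by linarith
      have h5 := pow_diff_ge' (n + 1) hρ0.le hρx hxy.le
      push_cast at h5
      have e1 : 2 * y ^ (n + 2) / c n - 2 * x ^ (n + 2) / c n
          = (2 * (y ^ (n + 2) - x ^ (n + 2))) / c n := by ring
      have e2 : (y - x) * (2 * ((n : ℝ) + 2) * ρ ^ (n + 1) / c n)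
          = ((y - x) * (2 * ((n : ℝ) + 2) * ρ ^ (n + 1))) / c n := by ring
      rw [e1, e2, div_le_div_iff_of_pos_right hcn0]
      nlinarith [h5]
    · have hc0 := hc 0
      have hcn0 : (0:ℝ) < c 0 := by linarith
      have e1 : 2 * y ^ (0 + 2) / c 0 - 2 * x ^ (0 + 2) / c 0
          = (2 * (y ^ 2 - x ^ 2)) / c 0 := by norm_num; ring
      have e2 : (y - x) * (2 * (((0:ℕ) : ℝ) + 2) * ρ ^ (0 + 1) / c 0)
          = ((y - x) * (4 * ρ)) / c 0 := by norm_num; ring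
      rw [e1, e2, div_lt_div_iff_of_pos_right hcn0]
      nlinarith [hρx, hxy, hρ0]
  have hsub := Summable.tsum_sub hsy hsx
  have hml : ∑' n : ℕ, (y - x) * (2 * ((n : ℝ) + 2) * ρ ^ (n + 1) / c n)
      = (y - x) * ∑' n : ℕ, 2 * ((n : ℝ) + 2) * ρ ^ (n + 1) / c n := tsum_mul_left
  rw [hml, ← hP, hsub] at key
  nlinarith [key]

/-- Sharpness of the univalence radius `ρ₃` for the class `G_{k,H}(α,1)`: if
`ρ₃` is the unique zero in `(0,1)` of
`J(r) = π/(4M) - ∑_{n≥2} 2n r^{n-1}/(1 + (n-1)α)`, then the extremal function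
`F₃(z) = (π/(4M)) z - ∑_{n≥2} 2 zⁿ/(1 + (n-1)α)` is not injective on `D_r`
for any `r ∈ (ρ₃, 1]`. -/
theorem landau_GkHa_sharpness (M α : ℝ) (hM : 0 < M) (hα : 0 ≤ α)
    (ρ₃ : ℝ) (hρ₃ : ρ₃ ∈ Set.Ioo (0:ℝ) 1)
    (hroot : Real.pi / (4 * M)
        - ∑' n : ℕ, 2 * ((n : ℝ) + 2) * ρ₃ ^ (n + 1) / (1 + ((n : ℝ) + 1) * α) = 0)
    (huniq : ∀ r ∈ Set.Ioo (0:ℝ) 1,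
      Real.pi / (4 * M)
          - ∑' n : ℕ, 2 * ((n : ℝ) + 2) * r ^ (n + 1) / (1 + ((n : ℝ) + 1) * α) = 0 →
        r = ρ₃) :
    ∀ r : ℝ, ρ₃ < r → r ≤ 1 →
      ∃ z₁ ∈ Metric.ball (0:ℂ) r, ∃ z₂ ∈ Metric.ball (0:ℂ) r, z₁ ≠ z₂ ∧
        ((Real.pi / (4 * M) : ℝ) : ℂ) * z₁
            - ∑' n : ℕ, 2 * z₁ ^ (n + 2) / (1 + ((n : ℕ) + 1 : ℂ) * (α : ℂ)) =
          ((Real.pi / (4 * M) : ℝ) : ℂ) * z₂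
            - ∑' n : ℕ, 2 * z₂ ^ (n + 2) / (1 + ((n : ℕ) + 1 : ℂ) * (α : ℂ)) := by
  intro r hrρ hr1
  obtain ⟨hρ0, hρ1⟩ := hρ₃
  have hc : ∀ n : ℕ, 1 ≤ 1 + ((n : ℝ) + 1) * α := by
    intro n
    have h0 : (0:ℝ) ≤ ((n : ℝ) + 1) * α := by positivity
    linarith
  set P := Real.pi / (4 * M) with hPdef
  have hP : P = ∑' n : ℕ, 2 * ((n : ℝ) + 2) * ρ₃ ^ (n + 1) / (1 + ((n : ℝ) + 1) * α) := by
    linarith [hroot]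
  set b := (ρ₃ + r) / 2 with hbdef
  have hρb : ρ₃ < b := by simp only [hbdef]; linarith
  have hbr : b < r := by simp only [hbdef]; linarith
  have hb1 : b < 1 := by simp only [hbdef]; linarith
  have hb0 : 0 < b := by simp only [hbdef]; linarith
  -- the clamped auxiliary function
  set q : ℝ → ℝ := fun x => max 0 (min x b) with hq
  set G : ℝ → ℝ :=
    fun x => P * x - ∑' n : ℕ, 2 * (q x) ^ (n + 2) / (1 + ((n : ℝ) + 1) * α) with hG
  have hq0 : ∀ x, 0 ≤ q x := fun x => le_max_left _ _
  have hqb : ∀ x, q x ≤ b := fun x => max_le hb0.le (min_le_right _ _)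
  have hqx : ∀ x, 0 ≤ x → x ≤ b → q x = x := by
    intro x h0 hxb
    simp only [hq]
    rw [min_eq_left hxb, max_eq_right h0]
  have hGeq : ∀ x, 0 ≤ x → x ≤ b →
      G x = P * x - ∑' n : ℕ, 2 * x ^ (n + 2) / (1 + ((n : ℝ) + 1) * α) := by
    intro x h0 hxb
    simp only [hG, hqx x h0 hxb]
  have hGcont : Continuous G := by
    apply Continuous.sub (continuous_const.mul continuous_id)
    apply continuous_tsum (u := fun n : ℕ => 2 * b ^ (n + 2))
    · intro n
      have hcq : Continuous q := continuous_const.max (continuous_id.min continuous_const)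
      exact (continuous_const.mul (hcq.pow (n + 2))).div_const _
    · apply Summable.congr (((summable_geometric_of_lt_one hb0.le hb1).mul_left (2 * b ^ 2)))
      intro n
      ring
    · intro n x
      have hcn := hc n
      have h1 : (0:ℝ) ≤ 2 * (q x) ^ (n + 2) / (1 + ((n : ℝ) + 1) * α) := by
        have := hq0 x
        positivity
      rw [Real.norm_eq_abs, abs_of_nonneg h1]
      calc 2 * (q x) ^ (n + 2) / (1 + ((n : ℝ) + 1) * α) ≤ 2 * (q x) ^ (n + 2) :=
            div_le_self (by have := hq0 x; positivity) hcn
        _ ≤ 2 * b ^ (n + 2) := by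
            have := pow_le_pow_left₀ (hq0 x) (hqb x) (n + 2)
            linarith
  have hS0 : ∑' n : ℕ, 2 * (0:ℝ) ^ (n + 2) / (1 + ((n : ℝ) + 1) * α) = 0 := by
    simp
  have hzero : G 0 = 0 := by
    rw [hGeq 0 le_rfl hb0.le, hS0]
    ring
  have hGρeq := hGeq ρ₃ hρ0.le hρb.le
  have hρpos : 0 < G ρ₃ := by
    have h := incr_aux hc hρ0 hρ1 hP le_rfl hρ0 le_rfl
    rw [hS0] at h
    rw [hGρeq]
    linarith
  -- pick x₂ slightly to the right of ρ₃ where G is still positive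
  have hev1 : ∀ᶠ x in nhds ρ₃, 0 < G x :=
    (hGcont.tendsto ρ₃).eventually (eventually_gt_nhds hρpos)
  have hev2 : ∀ᶠ x in nhdsWithin ρ₃ (Set.Ioi ρ₃), 0 < G x :=
    hev1.filter_mono nhdsWithin_le_nhds
  have hev3 : Set.Ioo ρ₃ b ∈ nhdsWithin ρ₃ (Set.Ioi ρ₃) :=
    Ioo_mem_nhdsGT_of_mem ⟨le_rfl, hρb⟩
  obtain ⟨x₂, hGx₂, hx₂mem⟩ := (hev2.and hev3).exists
  obtain ⟨hρx₂, hx₂b⟩ := hx₂mem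
  have hx₂0 : (0:ℝ) ≤ x₂ := le_of_lt (hρ0.trans hρx₂)
  have hx₂eq := hGeq x₂ hx₂0 hx₂b.le
  have hdecr : G x₂ < G ρ₃ := by
    rw [hx₂eq, hGρeq]
    exact decr_aux hc hρ0 hρ1 hP le_rfl hρx₂ (hx₂b.trans hb1)
  -- intermediate value theorem on [0, ρ₃]
  have hmem : G x₂ ∈ Set.Icc (G 0) (G ρ₃) := ⟨by rw [hzero]; exact hGx₂.le, hdecr.le⟩
  obtain ⟨x₁, hx₁mem, hx₁eq⟩ := intermediate_value_Icc hρ0.le hGcont.continuousOn hmem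
  obtain ⟨hx₁0, hx₁ρ⟩ := hx₁mem
  have hx₁b : x₁ ≤ b := hx₁ρ.trans hρb.le
  have hx₁eq' := hGeq x₁ hx₁0 hx₁b
  -- cast lemma
  have hcast : ∀ x : ℝ, (P:ℂ) * (x:ℂ)
      - ∑' n : ℕ, 2 * (x:ℂ) ^ (n + 2) / (1 + ((n : ℕ) + 1 : ℂ) * (α : ℂ))
      = ((P * x - ∑' n : ℕ, 2 * x ^ (n + 2) / (1 + ((n : ℝ) + 1) * α) : ℝ) : ℂ) := by
    intro x
    have h1 : (∑' n : ℕ, 2 * (x:ℂ) ^ (n + 2) / (1 + ((n : ℕ) + 1 : ℂ) * (α : ℂ)))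
        = ∑' n : ℕ, (((2 * x ^ (n + 2) / (1 + ((n : ℝ) + 1) * α) : ℝ)) : ℂ) := by
      apply tsum_congr
      intro n
      push_cast
      ring
    rw [h1, ← Complex.ofReal_tsum]
    push_cast
    ring
  refine ⟨(x₁ : ℂ), ?_, (x₂ : ℂ), ?_, ?_, ?_⟩
  · rw [mem_ball_zero_iff, Complex.norm_real, Real.norm_eq_abs, abs_of_nonneg hx₁0]
    linarith
  · rw [mem_ball_zero_iff, Complex.norm_real, Real.norm_eq_abs, abs_of_nonneg hx₂0]
    linarith
  · intro h
    have := Complex.ofReal_inj.mp h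
    linarith [hρx₂]
  · rw [hcast x₁, hcast x₂]
    rw [← hx₁eq', ← hx₂eq, hx₁eq]
end
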